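/- arXiv:math/0608125 — 6 statements merged into one kernel-verified Lean document; each statement's English description precedes it below -/
import Mathlib

section
/- Let S be a grope frame, m ≤ n, and W ∈ W(E_m) a word. Then the word e_{m,n}[W] ∈ W(E_n) is reduced if and only if W is reduced. -/
/-! Basic definitions for grope groups, following Cencelj–Eda–Vavpetič,
"Rigidity of the minimal grope group". -/

/-- A *grope frame* is a set `S` of finite sequences of natural numbers containing the
empty sequence and such that for every `s ∈ S` there is `n > 0` with
`{i | s ++ [i] ∈ S} = {0, …, 2n - 1}`. -/
structure GropeFrame where
  S : Set (List ℕ)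
  nil_mem : [] ∈ S
  branch : ∀ s ∈ S, ∃ n : ℕ, 0 < n ∧ {i : ℕ | s ++ [i] ∈ S} = Set.Iio (2 * n)

namespace GropeFrame

/-- The number of children of a sequence `s` in the frame. -/
noncomputable def deg (G : GropeFrame) (s : List ℕ) : ℕ :=
  sInf {i : ℕ | s ++ [i] ∉ G.S}

theorem deg_eq (G : GropeFrame) {s : List ℕ} {n : ℕ}
    (hn : {i : ℕ | s ++ [i] ∈ G.S} = Set.Iio (2 * n)) : G.deg s = 2 * n := by
  have hc : {i : ℕ | s ++ [i] ∉ G.S} = Set.Ici (2 * n) := by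
    ext i
    have h := Set.ext_iff.1 hn i
    simp only [Set.mem_setOf_eq, Set.mem_Iio] at h
    simp [Set.mem_Ici, h, not_lt]
  rw [deg, hc, csInf_Ici]

theorem mem_of_lt_deg (G : GropeFrame) {s : List ℕ} (hs : s ∈ G.S) {i : ℕ}
    (hi : i < G.deg s) : s ++ [i] ∈ G.S := by
  obtain ⟨n, -, hn⟩ := G.branch s hs
  rw [G.deg_eq hn] at hi
  exact (Set.ext_iff.1 hn i).2 hi

/-- `s` is binary branched in the frame `G` if its set of children indices is `{0, 1}`. -/
def BinaryBranched (G : GropeFrame) (s : List ℕ) : Prop :=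
  {i : ℕ | s ++ [i] ∈ G.S} = {0, 1}

end GropeFrame

/-- The set `E_m` of free generators `c_s`, `s ∈ S`, `lh s = m`, of the free group `F_m`. -/
abbrev GropeGen (G : GropeFrame) (m : ℕ) : Type :=
  {s : List ℕ // s ∈ G.S ∧ s.length = m}

/-- The generator `c_{s i}` obtained by appending `i` to `s`. -/
def gropeChild {G : GropeFrame} {m : ℕ} (x : GropeGen G m) (i : ℕ)
    (hi : i < G.deg x.1) : GropeGen G (m + 1) :=
  ⟨x.1 ++ [i], ⟨G.mem_of_lt_deg x.2.1 hi, by simp [x.2.2]⟩⟩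

open scoped commutatorElement

/-- The bonding homomorphism `e_m : F_m → F_{m+1}`, sending `c_s` to
`[c_{s0}, c_{s1}] ⋯ [c_{s(2k-2)}, c_{s(2k-1)}]`. -/
noncomputable def gropeE (G : GropeFrame) (m : ℕ) :
    FreeGroup (GropeGen G m) →* FreeGroup (GropeGen G (m + 1)) :=
  FreeGroup.lift fun x =>
    (List.ofFn fun j : Fin (G.deg x.1 / 2) =>
      ⁅FreeGroup.of (gropeChild x (2 * (j : ℕ)) (by have := j.isLt; omega)),
        FreeGroup.of (gropeChild x (2 * (j : ℕ) + 1) (by have := j.isLt; omega))⁆).prod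

/-- The composite `e_{m,n} = e_{n-1} ∘ ⋯ ∘ e_m : F_m → F_n`. -/
noncomputable def gropeEle (G : GropeFrame) {m n : ℕ} (h : m ≤ n)
    (x : FreeGroup (GropeGen G m)) : FreeGroup (GropeGen G n) :=
  Nat.leRecOn (C := fun k => FreeGroup (GropeGen G k)) h
    (fun {k} y => gropeE G k y) x

/-- For `v ∈ F_n`, `MemF G m v` says that `v` lies in (the image of) `F_m`,
i.e. in the image of `e_{m,n}`. -/
def MemF (G : GropeFrame) (m : ℕ) {n : ℕ} (v : FreeGroup (GropeGen G n)) : Prop :=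
  ∃ (h : m ≤ n) (x : FreeGroup (GropeGen G m)), gropeEle G h x = v

/-- The formal inverse `W⁻` of a word. -/
def wordInv {α : Type*} (w : List (α × Bool)) : List (α × Bool) :=
  (w.map fun p => (p.1, !p.2)).reverse

/-- A word is reduced if no letter is adjacent to its formal inverse. -/
def IsReducedWord {α : Type*} (w : List (α × Bool)) : Prop :=
  w.Chain' fun a b => ¬(a.1 = b.1 ∧ b.2 = !a.2)

/-- A word is cyclically reduced if it is reduced and moreover its first and last letters
are not mutually inverse. -/
def IsCyclicallyReducedWord {α : Type*} (w : List (α × Bool)) : Prop :=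
  IsReducedWord w ∧ ∀ a b : α × Bool, w.getLast? = some a → w.head? = some b →
    ¬(a.1 = b.1 ∧ b.2 = !a.2)

/-- Expansion of a single letter: `c_t` is replaced by
`c_{t0} c_{t1} c_{t0}⁻ c_{t1}⁻ ⋯ c_{t(2k-2)} c_{t(2k-1)} c_{t(2k-2)}⁻ c_{t(2k-1)}⁻` and
`c_t⁻` by the formal inverse of this word. -/
noncomputable def letterExp (G : GropeFrame) {m : ℕ} (a : GropeGen G m × Bool) :
    List (GropeGen G (m + 1) × Bool) :=
  let P : List (GropeGen G (m + 1) × Bool) :=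
    (List.ofFn fun j : Fin (G.deg a.1.1 / 2) =>
      [(gropeChild a.1 (2 * (j : ℕ)) (by have := j.isLt; omega), true),
       (gropeChild a.1 (2 * (j : ℕ) + 1) (by have := j.isLt; omega), true),
       (gropeChild a.1 (2 * (j : ℕ)) (by have := j.isLt; omega), false),
       (gropeChild a.1 (2 * (j : ℕ) + 1) (by have := j.isLt; omega), false)]).flatten
  if a.2 then P else wordInv P

/-- The word `e_{m,n}[W]` obtained from `W ∈ W(E_m)` by iterated letter expansion. -/
noncomputable def wordExp (G : GropeFrame) {m n : ℕ} (h : m ≤ n)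
    (w : List (GropeGen G m × Bool)) : List (GropeGen G n × Bool) :=
  Nat.leRecOn (C := fun k => List (GropeGen G k × Bool)) h
    (fun {k} v => (v.map (letterExp G)).flatten) w

/-- `IsSmall G hmn W V` : the subword `V` of the reduced word `W ∈ W(E_n)` (where
`W ∈ F_m`, with `W ≡ e_{m,n}[W₀]`) is *small*, i.e. there are a letter `c` occurring in
`W₀` and `i ∈ ℕ` such that `V` is a subword of `e_{m+1,n}[c_{si}]` (resp. of
`e_{m+1,n}[c_{si}⁻]` when the occurring letter is negative). -/
def IsSmall (G : GropeFrame) {m n : ℕ} (hmn : m < n)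
    (W V : List (GropeGen G n × Bool)) : Prop :=
  ∃ W₀ : List (GropeGen G m × Bool), wordExp G hmn.le W₀ = W ∧
    ∃ c ∈ W₀, ∃ (i : ℕ) (hi : i < G.deg c.1.1),
      V <:+: wordExp G (Nat.succ_le_of_lt hmn) [(gropeChild c.1 i hi, c.2)]

section Basic1

variable {G : GropeFrame} {m : ℕ}

theorem GropeFrame.two_le_deg {s : List ℕ} (hs : s ∈ G.S) : 2 ≤ G.deg s := by
  obtain ⟨n, hn0, hn⟩ := G.branch s hs
  rw [G.deg_eq hn]; omega

theorem GropeFrame.deg_even {s : List ℕ} (hs : s ∈ G.S) :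
    2 * (G.deg s / 2) = G.deg s := by
  obtain ⟨n, hn0, hn⟩ := G.branch s hs
  rw [G.deg_eq hn]; omega

theorem gropeChild_inj {x y : GropeGen G m} {i j : ℕ} {hi : i < G.deg x.1}
    {hj : j < G.deg y.1} : gropeChild x i hi = gropeChild y j hj ↔ x = y ∧ i = j := by
  constructor
  · intro h
    have h' : x.1 ++ [i] = y.1 ++ [j] := congrArg Subtype.val h
    obtain ⟨h1, h2⟩ := List.append_inj' h' rfl
    exact ⟨Subtype.ext h1, by simpa using h2⟩
  · rintro ⟨rfl, rfl⟩; rfl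

/-- The relation of two adjacent letters not being mutually inverse. -/
abbrev NoCancel {α : Type*} (a b : α × Bool) : Prop := ¬(a.1 = b.1 ∧ b.2 = !a.2)

theorem noCancel_of_ne {α : Type*} {x y : α} {bx by' : Bool} (h : x ≠ y) :
    NoCancel (x, bx) (y, by') := fun hc => h hc.1

theorem chain'_wordInv {α : Type*} {w : List (α × Bool)} :
    (wordInv w).Chain' NoCancel ↔ w.Chain' NoCancel := by
  unfold List.Chain'
  rw [wordInv, List.isChain_reverse, List.isChain_map]
  constructor <;> refine fun h => h.imp fun a b hab => ?_ <;>
    · rintro ⟨h1, h2⟩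
      exact hab ⟨h1.symm, by revert h2; cases a.2 <;> cases b.2 <;> simp⟩

theorem head?_wordInv {α : Type*} {w : List (α × Bool)} :
    (wordInv w).head? = w.getLast?.map fun p => (p.1, !p.2) := by
  simp [wordInv]

theorem getLast?_wordInv {α : Type*} {w : List (α × Bool)} :
    (wordInv w).getLast? = w.head?.map fun p => (p.1, !p.2) := by
  simp [wordInv]

/-- The positive letter expansion. -/
noncomputable def gPosPart (G : GropeFrame) {m : ℕ} (x : GropeGen G m) :
    List (GropeGen G (m + 1) × Bool) :=
  (List.ofFn fun j : Fin (G.deg x.1 / 2) =>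
    [(gropeChild x (2 * (j : ℕ)) (by have := j.isLt; omega), true),
     (gropeChild x (2 * (j : ℕ) + 1) (by have := j.isLt; omega), true),
     (gropeChild x (2 * (j : ℕ)) (by have := j.isLt; omega), false),
     (gropeChild x (2 * (j : ℕ) + 1) (by have := j.isLt; omega), false)]).flatten

theorem letterExp_true (x : GropeGen G m) :
    letterExp G (x, true) = gPosPart G x := rfl

theorem letterExp_false (x : GropeGen G m) :
    letterExp G (x, false) = wordInv (gPosPart G x) := rfl

theorem head?_gPosPart (x : GropeGen G m) (h0 : 0 < G.deg x.1) :
    (gPosPart G x).head? = some (gropeChild x 0 h0, true) := by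
  have h2 := G.two_le_deg x.2.1
  unfold gPosPart
  obtain ⟨k, hk⟩ : ∃ k, G.deg x.1 / 2 = k + 1 := ⟨G.deg x.1 / 2 - 1, by omega⟩
  rw [List.ofFn_congr hk _, List.ofFn_succ, List.flatten_cons]
  simp

theorem getLast?_gPosPart (x : GropeGen G m) (h1 : G.deg x.1 - 1 < G.deg x.1) :
    (gPosPart G x).getLast? = some (gropeChild x (G.deg x.1 - 1) h1, false) := by
  have h2 := G.two_le_deg x.2.1
  have heven := G.deg_even x.2.1
  unfold gPosPart
  obtain ⟨k, hk⟩ : ∃ k, G.deg x.1 / 2 = k + 1 := ⟨G.deg x.1 / 2 - 1, by omega⟩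
  rw [List.ofFn_congr hk _, List.ofFn_succ', List.concat_eq_append,
    List.flatten_append, List.getLast?_append_of_ne_nil _ (by simp)]
  simp only [List.flatten, List.append_nil, Fin.val_last, Fin.coe_cast,
    List.getLast?_append_of_ne_nil _ (List.cons_ne_nil _ _)]
  simp only [List.append_eq, List.append_nil, List.getLast?_cons_cons, List.getLast?_singleton, Option.some.injEq,
    Prod.mk.injEq, and_true]
  exact gropeChild_inj.2 ⟨rfl, by omega⟩

theorem gPosPart_ne_nil (x : GropeGen G m) : gPosPart G x ≠ [] := by
  intro h
  have h0 : 0 < G.deg x.1 := by have := G.two_le_deg x.2.1; omega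
  have := congrArg List.head? h
  rw [head?_gPosPart x h0] at this
  simp at this

theorem chain'_gPosPart (x : GropeGen G m) : (gPosPart G x).Chain' NoCancel := by
  unfold gPosPart
  unfold List.Chain'
  rw [List.isChain_flatten (by simp [List.mem_ofFn])]
  constructor
  · rw [List.forall_mem_ofFn_iff]
    intro j
    simp only [List.isChain_cons_cons, List.isChain_singleton, and_true]
    refine ⟨noCancel_of_ne ?_, noCancel_of_ne ?_, noCancel_of_ne ?_⟩ <;>
      · intro he
        obtain ⟨-, h2⟩ := gropeChild_inj.1 he
        omega
  · rw [List.isChain_ofFn]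
    intro i hi
    simp only [List.getLast?_cons_cons, List.getLast?_singleton, List.head?_cons,
      Option.mem_def, Option.some.injEq]
    rintro x' rfl y rfl
    refine noCancel_of_ne fun he => ?_
    obtain ⟨-, h2⟩ := gropeChild_inj.1 he
    omega

theorem letterExp_ne_nil (a : GropeGen G m × Bool) : letterExp G a ≠ [] := by
  obtain ⟨x, b⟩ := a
  cases b
  · rw [letterExp_false]
    intro h
    apply gPosPart_ne_nil x
    simpa [wordInv] using h
  · rw [letterExp_true]; exact gPosPart_ne_nil x

theorem getLast?_letterExp (a : GropeGen G m × Bool) :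
    ∃ (i : ℕ) (hi : i < G.deg a.1.1),
      (letterExp G a).getLast? = some (gropeChild a.1 i hi, false) ∧
      i = if a.2 then G.deg a.1.1 - 1 else 0 := by
  obtain ⟨x, b⟩ := a
  have h2 := G.two_le_deg x.2.1
  cases b
  · refine ⟨0, Nat.lt_of_lt_of_le Nat.zero_lt_two h2, ?_, rfl⟩
    rw [letterExp_false, getLast?_wordInv, head?_gPosPart x (by omega)]
    rfl
  · refine ⟨G.deg x.1 - 1, Nat.sub_lt (by omega) Nat.one_pos, ?_, rfl⟩
    rw [letterExp_true]
    exact getLast?_gPosPart x (by omega)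

theorem head?_letterExp (a : GropeGen G m × Bool) :
    ∃ (i : ℕ) (hi : i < G.deg a.1.1),
      (letterExp G a).head? = some (gropeChild a.1 i hi, true) ∧
      i = if a.2 then 0 else G.deg a.1.1 - 1 := by
  obtain ⟨x, b⟩ := a
  have h2 := G.two_le_deg x.2.1
  cases b
  · refine ⟨G.deg x.1 - 1, Nat.sub_lt (by omega) Nat.one_pos, ?_, rfl⟩
    rw [letterExp_false, head?_wordInv, getLast?_gPosPart x (by omega)]
    rfl
  · refine ⟨0, Nat.lt_of_lt_of_le Nat.zero_lt_two h2, ?_, rfl⟩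
    rw [letterExp_true]
    exact head?_gPosPart x (by omega)

theorem junction_iff (a b : GropeGen G m × Bool) :
    (∀ x ∈ (letterExp G a).getLast?, ∀ y ∈ (letterExp G b).head?, NoCancel x y)
      ↔ NoCancel a b := by
  have h2a := G.two_le_deg a.1.2.1
  have h2b := G.two_le_deg b.1.2.1
  obtain ⟨ia, hia, hla, hia'⟩ := getLast?_letterExp a
  obtain ⟨ib, hib, hhb, hib'⟩ := head?_letterExp b
  rw [hla, hhb]
  simp only [Option.mem_def, Option.some.injEq]
  constructor
  · intro h
    rintro ⟨hab1, hab2⟩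
    have hdeg : G.deg a.1.1 = G.deg b.1.1 := by rw [hab1]
    have hii : ia = ib := by
      cases ha2 : a.2 <;> cases hb2 : b.2 <;> simp_all <;> omega
    refine h _ rfl _ rfl ⟨?_, rfl⟩
    exact (gropeChild_inj (hi := hia) (hj := hib)).2 ⟨hab1, hii⟩
  · intro h x hx y hy
    rintro ⟨h1, -⟩
    rw [← hx, ← hy] at h1
    have h1' : gropeChild a.1 ia hia = gropeChild b.1 ib hib := h1
    obtain ⟨hab1, hii⟩ := gropeChild_inj.1 h1'
    apply h
    refine ⟨hab1, ?_⟩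
    have hdeg : G.deg a.1.1 = G.deg b.1.1 := by rw [hab1]
    cases ha2 : a.2 <;> cases hb2 : b.2 <;> simp_all <;> omega

theorem step_iff (W : List (GropeGen G m × Bool)) :
    IsReducedWord ((W.map (letterExp G)).flatten) ↔ IsReducedWord W := by
  have hmem : [] ∉ W.map (letterExp G) := by
    intro h
    obtain ⟨a, -, ha⟩ := List.mem_map.1 h
    exact letterExp_ne_nil a ha
  unfold IsReducedWord List.Chain'
  rw [List.isChain_flatten hmem, List.isChain_map]
  constructor
  · rintro ⟨-, h2⟩
    exact h2.imp fun a b => (junction_iff a b).1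
  · intro h
    refine ⟨?_, h.imp fun a b => (junction_iff a b).2⟩
    intro l hl
    obtain ⟨a, -, rfl⟩ := List.mem_map.1 hl
    obtain ⟨x, c⟩ := a
    cases c
    · rw [letterExp_false]
      exact chain'_wordInv.2 (chain'_gPosPart _)
    · rw [letterExp_true]
      exact chain'_gPosPart _

theorem wordExp_self {h : m ≤ m} (W : List (GropeGen G m × Bool)) :
    wordExp G h W = W := by
  unfold wordExp
  exact Nat.leRecOn_self (C := fun k => List (GropeGen G k × Bool)) W

theorem wordExp_succ {n : ℕ} (h : m ≤ n) {h' : m ≤ n + 1}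
    (W : List (GropeGen G m × Bool)) :
    wordExp G h' W = ((wordExp G h W).map (letterExp G)).flatten := by
  unfold wordExp
  exact Nat.leRecOn_succ (C := fun k => List (GropeGen G k × Bool)) h W

end Basic1

/-- **Lemma 1 (basic1).** For a grope frame `S`, `m ≤ n` and a word `W ∈ 𝒲(E_m)`,
the word `e_{m,n}[W] ∈ 𝒲(E_n)` is reduced if and only if `W` is reduced. -/
theorem wordExp_isReducedWord_iff (G : GropeFrame) {m n : ℕ} (h : m ≤ n)
    (W : List (GropeGen G m × Bool)) :
    IsReducedWord (wordExp G h W) ↔ IsReducedWord W := by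
  induction n, h using Nat.le_induction with
  | base => rw [wordExp_self]
  | succ n hn ih => rw [wordExp_succ hn, step_iff, ih]
end

section
/- Let S be a grope frame, m ≤ n, and V ∈ W(E_n) a reduced word. Then V ∈ F_m (i.e. the element of F_n represented by V lies in the image of e_{m,n}) if and only if there exists a word W ∈ W(E_m) such that e_{m,n}[W] ≡ V. -/
open scoped commutatorElement

open List

-- general list helpers
theorem flatten_ofFn_head? {β : Type*} {k : ℕ} (hk : 0 < k) (f : Fin k → List β)
    (hf : ∀ j, f j ≠ []) :
    ((List.ofFn f).flatten).head? = (f ⟨0, hk⟩).head? := by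
  cases k with
  | zero => omega
  | succ k =>
    rw [List.ofFn_succ, List.flatten_cons, List.head?_append_of_ne_nil _ (hf 0)]
    rfl

theorem flatten_ofFn_getLast? {β : Type*} {k : ℕ} (hk : 0 < k) (f : Fin k → List β)
    (hf : ∀ j, f j ≠ []) :
    ((List.ofFn f).flatten).getLast? = (f ⟨k - 1, by omega⟩).getLast? := by
  cases k with
  | zero => omega
  | succ k =>
    rw [List.ofFn_succ', List.concat_eq_append, List.flatten_append,
      List.flatten_cons, List.flatten_nil, List.append_nil,
      List.getLast?_append_of_ne_nil _ (hf (Fin.last k))]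
    rfl

theorem chain'_flatten_ofFn {β : Type*} {R : β → β → Prop} {k : ℕ} (f : Fin k → List β)
    (hf : ∀ j, f j ≠ []) (hin : ∀ j, (f j).Chain' R)
    (hjun : ∀ (j : ℕ) (h : j + 1 < k), ∀ x ∈ (f ⟨j, by omega⟩).getLast?,
      ∀ y ∈ (f ⟨j + 1, h⟩).head?, R x y) :
    ((List.ofFn f).flatten).Chain' R := by
  unfold List.Chain' at *
  rw [List.isChain_flatten (by simp only [List.mem_ofFn]; rintro ⟨j, hj⟩; exact hf j hj)]
  constructor
  · simp only [List.mem_ofFn]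
    rintro l ⟨j, rfl⟩; exact hin j
  · rw [List.isChain_iff_getElem]
    intro i hi
    simp only [List.length_ofFn] at hi
    simp only [List.getElem_ofFn]
    have := hjun i (by omega)
    convert this using 3 <;> simp [Fin.cast]
namespace GropeProof

variable {G : GropeFrame} {m n : ℕ}

/-- The positive part of the letter expansion. -/
noncomputable def posPart (G : GropeFrame) {m : ℕ} (x : GropeGen G m) :
    List (GropeGen G (m + 1) × Bool) :=
  (List.ofFn fun j : Fin (G.deg x.1 / 2) =>
    [(gropeChild x (2 * (j : ℕ)) (by have := j.isLt; omega), true),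
     (gropeChild x (2 * (j : ℕ) + 1) (by have := j.isLt; omega), true),
     (gropeChild x (2 * (j : ℕ)) (by have := j.isLt; omega), false),
     (gropeChild x (2 * (j : ℕ) + 1) (by have := j.isLt; omega), false)]).flatten

theorem letterExp_eq (a : GropeGen G m × Bool) :
    letterExp G a = if a.2 then posPart G a.1 else wordInv (posPart G a.1) := rfl

theorem wordInv_eq_invRev {α : Type*} (w : List (α × Bool)) :
    wordInv w = FreeGroup.invRev w := rfl

theorem deg_half_pos (x : GropeGen G m) : 0 < G.deg x.1 / 2 := by
  obtain ⟨k, hk0, hk⟩ := G.branch x.1 x.2.1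
  rw [G.deg_eq hk]
  omega

theorem posPart_head? (x : GropeGen G m) :
    (posPart G x).head? =
      some (gropeChild x 0 (by have := deg_half_pos x; omega), true) := by
  rw [posPart, flatten_ofFn_head? (deg_half_pos x) _ (fun j => by simp)]
  rfl

theorem posPart_getLast? (x : GropeGen G m) :
    (posPart G x).getLast? =
      some (gropeChild x (2 * (G.deg x.1 / 2) - 1)
        (by have := deg_half_pos x; omega), false) := by
  rw [posPart, flatten_ofFn_getLast? (deg_half_pos x) _ (fun j => by simp)]
  have h : 2 * (G.deg x.1 / 2 - 1) + 1 = 2 * (G.deg x.1 / 2) - 1 := by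
    have := deg_half_pos x; omega
  simp only [List.getLast?]
  congr 2
  · simp [gropeChild, h]

theorem posPart_ne_nil (x : GropeGen G m) : posPart G x ≠ [] := by
  intro h
  have := posPart_head? x
  rw [h] at this
  simp at this

theorem gropeChild_fst (x : GropeGen G m) (i : ℕ) (hi : i < G.deg x.1) :
    (gropeChild x i hi).1 = x.1 ++ [i] := rfl

theorem gropeChild_ne (x : GropeGen G m) {i j : ℕ} (hi : i < G.deg x.1)
    (hj : j < G.deg x.1) (hij : i ≠ j) : gropeChild x i hi ≠ gropeChild x j hj := by
  intro h
  apply hij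
  have := congrArg Subtype.val h
  simpa [gropeChild] using this

theorem letterExp_true (x : GropeGen G m) : letterExp G (x, true) = posPart G x := rfl

theorem letterExp_false (x : GropeGen G m) :
    letterExp G (x, false) = wordInv (posPart G x) := rfl

theorem posPart_chain' (x : GropeGen G m) :
    (posPart G x).Chain' (fun p q => p.1 ≠ q.1) := by
  apply chain'_flatten_ofFn _ (fun j => by simp)
  · intro j
    refine List.isChain_cons_cons.2 ⟨?_, List.isChain_cons_cons.2 ⟨?_, List.isChain_cons_cons.2 ⟨?_, ?_⟩⟩⟩ <;> first
        | · simp only [ne_eq]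
            exact gropeChild_ne x _ _ (by omega)
        | exact List.isChain_singleton _
  · intro j hj x' hx' y hy
    simp only [List.getLast?_cons_cons, List.getLast?_singleton, List.head?_cons,
      Option.mem_def, Option.some.injEq] at hx' hy
    subst hx'; subst hy
    exact gropeChild_ne x (by omega) (by omega) (by omega)

theorem wordInv_ne_nil {α : Type*} {w : List (α × Bool)} (hw : w ≠ []) : wordInv w ≠ [] := by
  simp [wordInv, hw]

theorem wordInv_head? {α : Type*} (w : List (α × Bool)) :
    (wordInv w).head? = w.getLast?.map (fun p => (p.1, !p.2)) := by
  rw [wordInv, List.head?_reverse, List.getLast?_map]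

theorem wordInv_getLast? {α : Type*} (w : List (α × Bool)) :
    (wordInv w).getLast? = w.head?.map (fun p => (p.1, !p.2)) := by
  rw [wordInv, List.getLast?_reverse, List.head?_map]

theorem wordInv_chain' {α : Type*} {w : List (α × Bool)}
    (hw : w.Chain' (fun p q => p.1 ≠ q.1)) :
    (wordInv w).Chain' (fun p q => p.1 ≠ q.1) := by
  unfold List.Chain' at *
  rw [wordInv, List.isChain_reverse, List.isChain_map]
  exact hw.imp (fun {a b} h => by simpa [flip] using h.symm)

theorem letterExp_ne_nil (a : GropeGen G m × Bool) : letterExp G a ≠ [] := by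
  rcases a with ⟨x, b⟩
  cases b
  · rw [letterExp_false]; exact wordInv_ne_nil (posPart_ne_nil x)
  · rw [letterExp_true]; exact posPart_ne_nil x

theorem letterExp_chain' (a : GropeGen G m × Bool) :
    (letterExp G a).Chain' (fun p q => p.1 ≠ q.1) := by
  rcases a with ⟨x, b⟩
  cases b
  · rw [letterExp_false]; exact wordInv_chain' (posPart_chain' x)
  · rw [letterExp_true]; exact posPart_chain' x

theorem letterExp_head?_spec (a : GropeGen G m × Bool) :
    ∃ p, (letterExp G a).head? = some p ∧
      p.1.1 = a.1.1 ++ [if a.2 = true then 0 else 2 * (G.deg a.1.1 / 2) - 1] := by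
  rcases a with ⟨x, b⟩
  cases b
  · rw [letterExp_false]
    refine ⟨_, by rw [wordInv_head?, posPart_getLast?]; rfl, ?_⟩
    simp [gropeChild]
  · rw [letterExp_true]
    exact ⟨_, by rw [posPart_head?], by simp [gropeChild]⟩

theorem letterExp_getLast?_spec (a : GropeGen G m × Bool) :
    ∃ p, (letterExp G a).getLast? = some p ∧
      p.1.1 = a.1.1 ++ [if a.2 = true then 2 * (G.deg a.1.1 / 2) - 1 else 0] := by
  rcases a with ⟨x, b⟩
  cases b
  · rw [letterExp_false]
    refine ⟨_, by rw [wordInv_getLast?, posPart_head?]; rfl, ?_⟩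
    simp [gropeChild]
  · rw [letterExp_true]
    exact ⟨_, by rw [posPart_getLast?], by simp [gropeChild]⟩

theorem letterExp_junction (a b : GropeGen G m × Bool)
    (hab : ¬(a.1 = b.1 ∧ b.2 = !a.2)) :
    ∀ x ∈ (letterExp G a).getLast?, ∀ y ∈ (letterExp G b).head?, x.1 ≠ y.1 := by
  obtain ⟨p, hp, hp1⟩ := letterExp_getLast?_spec a
  obtain ⟨q, hq, hq1⟩ := letterExp_head?_spec b
  intro x hx y hy
  rw [Option.mem_def, hp] at hx
  rw [Option.mem_def, hq] at hy
  cases hx; cases hy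
  intro hpq
  have hval : p.1.1 = q.1.1 := congrArg Subtype.val hpq
  rw [hp1, hq1] at hval
  by_cases hab1 : a.1.1 = b.1.1
  · have hgen : a.1 = b.1 := Subtype.ext hab1
    have hb2 : b.2 = a.2 := by
      rcases Bool.eq_or_eq_not b.2 a.2 with h | h
      · exact h
      · exact absurd ⟨hgen, h⟩ hab
    rw [hab1, hb2, List.append_cancel_left_eq] at hval
    have hk := deg_half_pos b.1
    cases hA : a.2 <;> rw [hA] at hval <;> simp at hval <;> omega
  · have hlen : a.1.1.length = b.1.1.length := by rw [a.1.2.2, b.1.2.2]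
    exact hab1 (List.append_inj_left hval hlen)

theorem isReducedWord_of_chain' {k : ℕ} {w : List (GropeGen G k × Bool)}
    (hw : w.Chain' (fun p q => p.1 ≠ q.1)) : IsReducedWord w :=
  List.IsChain.imp (fun {_ _} h hc => h hc.1) hw

theorem isReducedWord_expand {w : List (GropeGen G m × Bool)} (hw : IsReducedWord w) :
    IsReducedWord ((w.map (letterExp G)).flatten) := by
  apply isReducedWord_of_chain'
  unfold List.Chain' at *
  rw [List.isChain_flatten (by
    intro hmem
    obtain ⟨a, -, ha⟩ := List.mem_map.1 hmem
    exact letterExp_ne_nil a ha)]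
  constructor
  · simp only [List.mem_map]
    rintro l ⟨a, -, rfl⟩
    exact letterExp_chain' a
  · rw [List.isChain_map]
    exact List.IsChain.imp (fun {a b} h => letterExp_junction a b h) hw

theorem mk_flatten {α : Type*} (L : List (List (α × Bool))) :
    FreeGroup.mk L.flatten = (L.map FreeGroup.mk).prod := by
  induction L with
  | nil => simp [← FreeGroup.one_eq_mk]
  | cons l L ih => simp [List.flatten_cons, ← FreeGroup.mul_mk, ih]

theorem mk_comm {α : Type*} (x y : α) :
    ⁅FreeGroup.of x, FreeGroup.of y⁆ =
      FreeGroup.mk [(x, true), (y, true), (x, false), (y, false)] := by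
  rw [commutatorElement_def]
  show FreeGroup.mk [(x, true)] * FreeGroup.mk [(y, true)] * (FreeGroup.mk [(x, true)])⁻¹ *
      (FreeGroup.mk [(y, true)])⁻¹ = _
  rw [FreeGroup.inv_mk, FreeGroup.inv_mk]
  rw [FreeGroup.mul_mk, FreeGroup.mul_mk, FreeGroup.mul_mk]
  rfl

theorem mk_letterExp (a : GropeGen G m × Bool) :
    FreeGroup.mk (letterExp G a) = gropeE G m (FreeGroup.mk [a]) := by
  have key : ∀ x : GropeGen G m,
      FreeGroup.mk (posPart G x) = gropeE G m (FreeGroup.of x) := by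
    intro x
    rw [posPart, mk_flatten, List.map_ofFn, gropeE, FreeGroup.lift_apply_of]
    congr 1
    all_goals
      apply congrArg List.ofFn
      funext j
      exact (mk_comm _ _).symm
  rcases a with ⟨x, b⟩
  cases b
  · rw [letterExp_false, wordInv_eq_invRev, ← FreeGroup.inv_mk, key]
    rw [show FreeGroup.mk [(x, false)] = (FreeGroup.of x)⁻¹ from by
      rw [show FreeGroup.of x = FreeGroup.mk [(x, true)] from rfl, FreeGroup.inv_mk]; rfl]
    rw [map_inv]
  · rw [letterExp_true, key]
    rfl

theorem mk_expandStep (w : List (GropeGen G m × Bool)) :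
    FreeGroup.mk ((w.map (letterExp G)).flatten) = gropeE G m (FreeGroup.mk w) := by
  induction w with
  | nil => simp [← FreeGroup.one_eq_mk]
  | cons a w ih =>
    rw [List.map_cons, List.flatten_cons, ← FreeGroup.mul_mk, ih, mk_letterExp,
      show (a :: w) = [a] ++ w from rfl, ← FreeGroup.mul_mk, map_mul]

theorem wordExp_refl (w : List (GropeGen G m × Bool)) : wordExp G (le_refl m) w = w := by
  unfold wordExp
  exact Nat.leRecOn_self (C := fun k => List (GropeGen G k × Bool)) w

theorem wordExp_succ (h : m ≤ n) {h2 : m ≤ n + 1} (w : List (GropeGen G m × Bool)) :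
    wordExp G h2 w = ((wordExp G h w).map (letterExp G)).flatten := by
  unfold wordExp
  exact Nat.leRecOn_succ (C := fun k => List (GropeGen G k × Bool)) h w

theorem gropeEle_refl (x : FreeGroup (GropeGen G m)) : gropeEle G (le_refl m) x = x := by
  unfold gropeEle
  exact Nat.leRecOn_self (C := fun k => FreeGroup (GropeGen G k)) x

theorem gropeEle_succ (h : m ≤ n) {h2 : m ≤ n + 1} (x : FreeGroup (GropeGen G m)) :
    gropeEle G h2 x = gropeE G n (gropeEle G h x) := by
  unfold gropeEle
  exact Nat.leRecOn_succ (C := fun k => FreeGroup (GropeGen G k)) h x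

theorem gropeEle_mk {n : ℕ} (h : m ≤ n) (w : List (GropeGen G m × Bool)) :
    gropeEle G h (FreeGroup.mk w) = FreeGroup.mk (wordExp G h w) := by
  induction n, h using Nat.le_induction with
  | base => rw [gropeEle_refl, wordExp_refl]
  | succ n hmn ih =>
    rw [gropeEle_succ hmn, wordExp_succ hmn, ih, ← mk_expandStep]

theorem isReducedWord_wordExp {n : ℕ} (h : m ≤ n) {w : List (GropeGen G m × Bool)}
    (hw : IsReducedWord w) : IsReducedWord (wordExp G h w) := by
  induction n, h using Nat.le_induction with
  | base => rw [wordExp_refl]; exact hw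
  | succ n hmn ih =>
    rw [wordExp_succ hmn]
    exact isReducedWord_expand ih

theorem reduce_eq_self {α : Type*} [DecidableEq α] {L : List (α × Bool)}
    (h : IsReducedWord L) : FreeGroup.reduce L = L := by
  induction L with
  | nil => rfl
  | cons a L ih =>
    have hL : IsReducedWord L := h.tail
    rw [FreeGroup.reduce.cons, ih hL]
    cases L with
    | nil => rfl
    | cons b t =>
      have hab : ¬(a.1 = b.1 ∧ b.2 = !a.2) := (List.isChain_cons_cons.1 h).1
      show (if a.1 = b.1 ∧ a.2 = !b.2 then t else a :: b :: t) = a :: b :: t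
      rw [if_neg]
      intro hc
      exact hab ⟨hc.1, by rcases hc with ⟨-, hc2⟩; cases ha : a.2 <;> cases hb : b.2 <;>
        simp_all⟩

theorem isReducedWord_reduce {α : Type*} [DecidableEq α] (L : List (α × Bool)) :
    IsReducedWord (FreeGroup.reduce L) := by
  induction L with
  | nil => exact List.isChain_nil
  | cons a L ih =>
    rw [FreeGroup.reduce.cons]
    cases hL : FreeGroup.reduce L with
    | nil => exact List.isChain_singleton _
    | cons b t =>
      rw [hL] at ih
      show IsReducedWord (if a.1 = b.1 ∧ a.2 = !b.2 then t else a :: b :: t)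
      split_ifs with hc
      · exact ih.tail
      · refine List.isChain_cons_cons.2 ⟨?_, ih⟩
        intro hab
        exact hc ⟨hab.1, by rcases hab with ⟨-, h2⟩; cases ha : a.2 <;> cases hb : b.2 <;>
          simp_all⟩

end GropeProof


/-- **Lemma 2 (basic2).** For a grope frame `S`, `m ≤ n` and a reduced word
`V ∈ 𝒲(E_n)`, one has `V ∈ F_m` (the element of `F_n` represented by `V` lies in the
image of `e_{m,n}`) if and only if there is a word `W ∈ 𝒲(E_m)` with `e_{m,n}[W] ≡ V`. -/
theorem memF_iff_exists_wordExp (G : GropeFrame) {m n : ℕ} (h : m ≤ n)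
    (V : List (GropeGen G n × Bool)) (hV : IsReducedWord V) :
    MemF G m (FreeGroup.mk V) ↔
      ∃ W : List (GropeGen G m × Bool), wordExp G h W = V := by
  classical
  constructor
  · rintro ⟨h', x, hx⟩
    refine ⟨FreeGroup.toWord x, ?_⟩
    have h1 : FreeGroup.mk (FreeGroup.toWord x) = x := FreeGroup.mk_toWord
    have h2 : IsReducedWord (FreeGroup.toWord x) := by
      rw [← FreeGroup.reduce_toWord x]
      exact GropeProof.isReducedWord_reduce _
    have h3 : gropeEle G h (FreeGroup.mk (FreeGroup.toWord x)) = FreeGroup.mk V := by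
      rw [h1]; exact hx
    rw [GropeProof.gropeEle_mk h] at h3
    have h4 := congrArg FreeGroup.toWord h3
    rw [FreeGroup.toWord_mk, FreeGroup.toWord_mk,
      GropeProof.reduce_eq_self (GropeProof.isReducedWord_wordExp h h2),
      GropeProof.reduce_eq_self hV] at h4
    exact h4
  · rintro ⟨W, rfl⟩
    exact ⟨h, FreeGroup.mk W, GropeProof.gropeEle_mk h W⟩
end

section
/- Let S be a grope frame, m ≤ n, and let X, Y ∈ W(E_n) be words such that both XY and YX are reduced words. If XY ∈ F_m and YX ∈ F_m, then X ∈ F_m and Y ∈ F_m. -/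
open scoped commutatorElement

namespace GropeLemma7
variable {G : GropeFrame}

lemma deg_two {m : ℕ} (c : GropeGen G m) : ∃ k, 0 < k ∧ G.deg c.1 = 2 * k := by
  obtain ⟨k, hk, hset⟩ := G.branch c.1 c.2.1
  exact ⟨k, hk, G.deg_eq hset⟩

lemma half_deg_pos {m : ℕ} (c : GropeGen G m) : 1 ≤ G.deg c.1 / 2 := by
  obtain ⟨k, hk, hd⟩ := deg_two c; omega

lemma deg_eq_two_half {m : ℕ} (c : GropeGen G m) : G.deg c.1 = 2 * (G.deg c.1 / 2) := by
  obtain ⟨k, hk, hd⟩ := deg_two c; omega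

lemma child_inj {m : ℕ} {c c' : GropeGen G m} {i i' : ℕ} {hi : i < G.deg c.1}
    {hi' : i' < G.deg c'.1} (h : gropeChild c i hi = gropeChild c' i' hi') :
    c = c' ∧ i = i' := by
  have h1 : c.1 ++ [i] = c'.1 ++ [i'] := congrArg Subtype.val h
  have hlen : c.1.length = c'.1.length := by rw [c.2.2, c'.2.2]
  obtain ⟨h2, h3⟩ := List.append_inj h1 hlen
  exact ⟨Subtype.ext h2, by simpa using h3⟩

lemma child_eq {m : ℕ} (c : GropeGen G m) {i i' : ℕ} (hi : i < G.deg c.1)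
    (hi' : i' < G.deg c.1) (h : i = i') : gropeChild c i hi = gropeChild c i' hi' := by
  subst h; rfl

lemma flatten_ofFn_length {β : Type*} : ∀ (k : ℕ) (g : Fin k → List β),
    (∀ j, (g j).length = 4) → (List.ofFn g).flatten.length = 4 * k
  | 0, g, _ => by simp
  | k+1, g, hg => by
    rw [List.ofFn_succ, List.flatten_cons, List.length_append, hg,
      flatten_ofFn_length k _ (fun j => hg j.succ)]
    ring

lemma flatten_ofFn_getElem? {β : Type*} : ∀ (k : ℕ) (g : Fin k → List β),
    (∀ j, (g j).length = 4) → ∀ (j r : ℕ) (hj : j < k), r < 4 →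
    (List.ofFn g).flatten[4 * j + r]? = (g ⟨j, hj⟩)[r]?
  | 0, _, _, j, _, hj, _ => absurd hj (Nat.not_lt_zero j)
  | k+1, g, hg, 0, r, _, hr => by
    rw [List.ofFn_succ, List.flatten_cons, List.getElem?_append_left (by rw [hg]; omega)]
    norm_num
  | k+1, g, hg, j+1, r, hj, hr => by
    rw [List.ofFn_succ, List.flatten_cons, List.getElem?_append_right (by rw [hg]; omega)]
    have h1 : 4 * (j+1) + r - (g 0).length = 4 * j + r := by rw [hg]; omega
    rw [h1, flatten_ofFn_getElem? k _ (fun j => hg j.succ) j r (by omega) hr]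
    rfl

end GropeLemma7
namespace GropeLemma7
variable {G : GropeFrame}

lemma letterExp_true {m : ℕ} (c : GropeGen G m) :
    letterExp G (c, true) =
    (List.ofFn fun j : Fin (G.deg c.1 / 2) =>
      [(gropeChild c (2 * (j : ℕ)) (by have := j.isLt; omega), true),
       (gropeChild c (2 * (j : ℕ) + 1) (by have := j.isLt; omega), true),
       (gropeChild c (2 * (j : ℕ)) (by have := j.isLt; omega), false),
       (gropeChild c (2 * (j : ℕ) + 1) (by have := j.isLt; omega), false)]).flatten := rfl

lemma letterExp_false {m : ℕ} (c : GropeGen G m) :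
    letterExp G (c, false) = wordInv (letterExp G (c, true)) := rfl

lemma letterExp_length {m : ℕ} (a : GropeGen G m × Bool) :
    (letterExp G a).length = 4 * (G.deg a.1.1 / 2) := by
  rcases a with ⟨c, b⟩
  have h : (letterExp G (c, true)).length = 4 * (G.deg c.1 / 2) := by
    rw [letterExp_true]
    exact flatten_ofFn_length (G.deg c.1 / 2)
      (fun j => [(gropeChild c (2 * (j : ℕ)) (by have := j.isLt; omega), true),
       (gropeChild c (2 * (j : ℕ) + 1) (by have := j.isLt; omega), true),
       (gropeChild c (2 * (j : ℕ)) (by have := j.isLt; omega), false),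
       (gropeChild c (2 * (j : ℕ) + 1) (by have := j.isLt; omega), false)])
      (fun j => rfl)
  cases b
  · rw [letterExp_false, wordInv, List.length_reverse, List.length_map]; exact h
  · exact h

lemma letterExp_true_get {m : ℕ} (c : GropeGen G m) (p : ℕ)
    (hp : p < 4 * (G.deg c.1 / 2)) :
    ∃ (i : ℕ) (hi : i < G.deg c.1),
      (letterExp G (c, true))[p]? = some (gropeChild c i hi, decide (p % 4 < 2)) ∧
      i = 2 * (p / 4) + p % 4 % 2 := by
  have hd := deg_eq_two_half c
  obtain ⟨j, r, hr4, rfl⟩ : ∃ j r, r < 4 ∧ p = 4 * j + r := ⟨p / 4, p % 4, by omega, by omega⟩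
  have hj : j < G.deg c.1 / 2 := by omega
  have hi : 2 * ((4 * j + r) / 4) + (4 * j + r) % 4 % 2 < G.deg c.1 := by omega
  refine ⟨_, hi, ?_, rfl⟩
  have key := flatten_ofFn_getElem? (G.deg c.1 / 2)
      (fun j => [(gropeChild c (2 * (j : ℕ)) (by have := j.isLt; omega), true),
       (gropeChild c (2 * (j : ℕ) + 1) (by have := j.isLt; omega), true),
       (gropeChild c (2 * (j : ℕ)) (by have := j.isLt; omega), false),
       (gropeChild c (2 * (j : ℕ) + 1) (by have := j.isLt; omega), false)])
      (fun j => rfl) j r hj hr4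
  rw [letterExp_true, key]
  have h4 : r = 0 ∨ r = 1 ∨ r = 2 ∨ r = 3 := by omega
  rcases h4 with h | h | h | h <;> subst h <;>
    · simp only [List.getElem?_cons_zero, List.getElem?_cons_succ, Option.some.injEq]
      rw [Prod.mk.injEq]
      refine ⟨child_eq c _ _ (by omega), by rw [Nat.mul_add_mod]; decide⟩

lemma letterExp_false_get {m : ℕ} (c : GropeGen G m) (p : ℕ)
    (hp : p < 4 * (G.deg c.1 / 2)) :
    ∃ (i : ℕ) (hi : i < G.deg c.1),
      (letterExp G (c, false))[p]? =
        some (gropeChild c i hi, !decide ((4 * (G.deg c.1 / 2) - 1 - p) % 4 < 2)) ∧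
      i = 2 * ((4 * (G.deg c.1 / 2) - 1 - p) / 4)
          + (4 * (G.deg c.1 / 2) - 1 - p) % 4 % 2 := by
  obtain ⟨i, hi, hget, hidx⟩ := letterExp_true_get c (4 * (G.deg c.1 / 2) - 1 - p) (by omega)
  refine ⟨i, hi, ?_, hidx⟩
  have hlen : (List.map (fun x : GropeGen G (m + 1) × Bool => (x.1, !x.2))
      (letterExp G (c, true))).length = 4 * (G.deg c.1 / 2) := by
    rw [List.length_map]; exact letterExp_length (c, true)
  rw [letterExp_false, wordInv, List.getElem?_reverse (by rw [hlen]; exact hp), hlen,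
    List.getElem?_map, hget]
  rfl

end GropeLemma7
namespace GropeLemma7
variable {G : GropeFrame}

lemma letterExp_get0 {m : ℕ} (c : GropeGen G m) (b : Bool) :
    ∃ (i : ℕ) (hi : i < G.deg c.1),
      (letterExp G (c, b))[0]? = some (gropeChild c i hi, true) ∧
      (b = true → i = 0) ∧ (b = false → i = G.deg c.1 - 1) := by
  have hK := half_deg_pos c; have hd := deg_eq_two_half c
  cases b
  · obtain ⟨i, hi, hg, hidx⟩ := letterExp_false_get c 0 (by omega)
    have h3 : (4 * (G.deg c.1 / 2) - 1 - 0) % 4 = 3 := by omega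
    refine ⟨i, hi, ?_, by simp, fun _ => by omega⟩
    rw [hg, h3]; rfl
  · obtain ⟨i, hi, hg, hidx⟩ := letterExp_true_get c 0 (by omega)
    refine ⟨i, hi, ?_, fun _ => by omega, by simp⟩
    rw [hg]; rfl

lemma letterExp_get1 {m : ℕ} (c : GropeGen G m) (b : Bool) :
    ∃ (i : ℕ) (hi : i < G.deg c.1),
      (letterExp G (c, b))[1]? = some (gropeChild c i hi, true) ∧
      (b = true → i = 1) ∧ (b = false → i = G.deg c.1 - 2) := by
  have hK := half_deg_pos c; have hd := deg_eq_two_half c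
  cases b
  · obtain ⟨i, hi, hg, hidx⟩ := letterExp_false_get c 1 (by omega)
    have h2 : (4 * (G.deg c.1 / 2) - 1 - 1) % 4 = 2 := by omega
    refine ⟨i, hi, ?_, by simp, fun _ => by omega⟩
    rw [hg, h2]; rfl
  · obtain ⟨i, hi, hg, hidx⟩ := letterExp_true_get c 1 (by omega)
    refine ⟨i, hi, ?_, fun _ => by omega, by simp⟩
    rw [hg]; rfl

lemma letterExp_get_last {m : ℕ} (c : GropeGen G m) (b : Bool) :
    ∃ (i : ℕ) (hi : i < G.deg c.1),
      (letterExp G (c, b))[4 * (G.deg c.1 / 2) - 1]? = some (gropeChild c i hi, false) ∧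
      (b = true → i = G.deg c.1 - 1) ∧ (b = false → i = 0) := by
  have hK := half_deg_pos c; have hd := deg_eq_two_half c
  cases b
  · obtain ⟨i, hi, hg, hidx⟩ := letterExp_false_get c (4 * (G.deg c.1 / 2) - 1) (by omega)
    have h0 : (4 * (G.deg c.1 / 2) - 1 - (4 * (G.deg c.1 / 2) - 1)) % 4 = 0 := by omega
    have h0' : (4 * (G.deg c.1 / 2) - 1 - (4 * (G.deg c.1 / 2) - 1)) / 4 = 0 := by omega
    refine ⟨i, hi, ?_, by simp, fun _ => by omega⟩
    rw [hg, h0]; rfl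
  · obtain ⟨i, hi, hg, hidx⟩ := letterExp_true_get c (4 * (G.deg c.1 / 2) - 1) (by omega)
    have h3 : (4 * (G.deg c.1 / 2) - 1) % 4 = 3 := by omega
    refine ⟨i, hi, ?_, fun _ => by omega, by simp⟩
    rw [hg, h3]; rfl

lemma letterExp_head_decode {m : ℕ} {a b : GropeGen G m × Bool}
    {x : GropeGen G (m + 1) × Bool}
    (ha : (letterExp G a)[0]? = some x) (hb : (letterExp G b)[0]? = some x) : a = b := by
  rcases a with ⟨c, ba⟩; rcases b with ⟨d, bb⟩
  have hdc := deg_eq_two_half c; have hKc := half_deg_pos c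
  obtain ⟨i, hi, hg, hit, hif⟩ := letterExp_get0 c ba
  obtain ⟨i', hi', hg', hit', hif'⟩ := letterExp_get0 d bb
  rw [hg] at ha; rw [hg'] at hb
  have e : (gropeChild c i hi, true) = (gropeChild d i' hi', true) :=
    (Option.some.inj ha).trans (Option.some.inj hb).symm
  rw [Prod.mk.injEq] at e
  obtain ⟨h1, h2⟩ := child_inj e.1
  subst h1
  cases ba <;> cases bb
  · rfl
  · have := hif rfl; have := hit' rfl; omega
  · have := hit rfl; have := hif' rfl; omega
  · rfl

lemma letterExp_head_sgn {m : ℕ} {a : GropeGen G m × Bool} {x : GropeGen G (m + 1) × Bool}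
    (ha : (letterExp G a)[0]? = some x) : x.2 = true := by
  rcases a with ⟨c, b⟩
  obtain ⟨i, hi, hg, -, -⟩ := letterExp_get0 c b
  rw [hg] at ha
  rw [← Option.some.inj ha]

lemma letterExp_last_sgn {m : ℕ} {a : GropeGen G m × Bool} {x : GropeGen G (m + 1) × Bool}
    (ha : (letterExp G a)[(letterExp G a).length - 1]? = some x) : x.2 = false := by
  rcases a with ⟨c, b⟩
  obtain ⟨i, hi, hg, -, -⟩ := letterExp_get_last c b
  have hlen : (letterExp G (c, b)).length = 4 * (G.deg c.1 / 2) := letterExp_length (c, b)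
  rw [hlen] at ha
  rw [hg] at ha
  rw [← Option.some.inj ha]

lemma letterExp_inner_neq {m : ℕ} {a : GropeGen G m × Bool} {p : ℕ}
    {x y : GropeGen G (m + 1) × Bool}
    (hx : (letterExp G a)[p]? = some x) (hy : (letterExp G a)[p + 1]? = some y) :
    x.1 ≠ y.1 := by
  rcases a with ⟨c, b⟩
  have hlt0 : p + 1 < (letterExp G (c, b)).length := by
    rcases List.getElem?_eq_some_iff.mp hy with ⟨h, -⟩; exact h
  have hlt : p + 1 < 4 * (G.deg c.1 / 2) := by
    rwa [letterExp_length (c, b)] at hlt0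
  have hdc := deg_eq_two_half c; have hKc := half_deg_pos c
  cases b
  · obtain ⟨i, hi, hg, hidx⟩ := letterExp_false_get c p (by omega)
    obtain ⟨i', hi', hg', hidx'⟩ := letterExp_false_get c (p + 1) (by omega)
    rw [hg] at hx; rw [hg'] at hy
    obtain rfl := Option.some.inj hx
    obtain rfl := Option.some.inj hy
    intro hxy
    obtain ⟨-, h2⟩ := child_inj (show gropeChild c i hi = gropeChild c i' hi' from hxy)
    omega
  · obtain ⟨i, hi, hg, hidx⟩ := letterExp_true_get c p (by omega)
    obtain ⟨i', hi', hg', hidx'⟩ := letterExp_true_get c (p + 1) (by omega)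
    rw [hg] at hx; rw [hg'] at hy
    obtain rfl := Option.some.inj hx
    obtain rfl := Option.some.inj hy
    intro hxy
    obtain ⟨-, h2⟩ := child_inj (show gropeChild c i hi = gropeChild c i' hi' from hxy)
    omega

lemma letterExp_junction {m : ℕ} {a b : GropeGen G m × Bool}
    (hab : ¬(a.1 = b.1 ∧ b.2 = !a.2)) {x y : GropeGen G (m + 1) × Bool}
    (hx : (letterExp G a)[(letterExp G a).length - 1]? = some x)
    (hy : (letterExp G b)[0]? = some y) :
    ¬(x.1 = y.1 ∧ y.2 = !x.2) := by
  rcases a with ⟨c, ba⟩; rcases b with ⟨d, bb⟩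
  have hdc := deg_eq_two_half c; have hKc := half_deg_pos c
  obtain ⟨i, hi, hg, hit, hif⟩ := letterExp_get_last c ba
  obtain ⟨i', hi', hg', hit', hif'⟩ := letterExp_get0 d bb
  have hlen : (letterExp G (c, ba)).length = 4 * (G.deg c.1 / 2) := letterExp_length (c, ba)
  rw [hlen] at hx
  rw [hg] at hx; rw [hg'] at hy
  obtain rfl := Option.some.inj hx
  obtain rfl := Option.some.inj hy
  rintro ⟨h1, -⟩
  obtain ⟨h2, h3⟩ := child_inj (show gropeChild c i hi = gropeChild d i' hi' from h1)
  subst h2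
  cases ba <;> cases bb
  · have := hif rfl; have := hif' rfl; omega
  · exact hab ⟨rfl, rfl⟩
  · exact hab ⟨rfl, rfl⟩
  · have := hit rfl; have := hit' rfl; omega

lemma pair_no_start {m : ℕ} {a b : GropeGen G m × Bool} {p : ℕ} (hp1 : 1 ≤ p)
    {x y : GropeGen G (m + 1) × Bool}
    (hx : (letterExp G a)[p]? = some x) (hy : (letterExp G a)[p + 1]? = some y)
    (hx0 : (letterExp G b)[0]? = some x) (hy1 : (letterExp G b)[1]? = some y) : False := by
  rcases a with ⟨c, ba⟩; rcases b with ⟨d, bb⟩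
  have hlt0 : p + 1 < (letterExp G (c, ba)).length := by
    rcases List.getElem?_eq_some_iff.mp hy with ⟨h, -⟩; exact h
  have hlt : p + 1 < 4 * (G.deg c.1 / 2) := by
    rwa [letterExp_length (c, ba)] at hlt0
  have hdc := deg_eq_two_half c; have hKc := half_deg_pos c
  obtain ⟨i0, hi0, hg0, hit0, hif0⟩ := letterExp_get0 d bb
  obtain ⟨i1, hi1, hg1, hit1, hif1⟩ := letterExp_get1 d bb
  rw [hg0] at hx0; rw [hg1] at hy1
  cases ba
  · obtain ⟨ix, hix, hgx, hidx⟩ := letterExp_false_get c p (by omega)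
    obtain ⟨iy, hiy, hgy, hidy⟩ := letterExp_false_get c (p + 1) (by omega)
    rw [hgx] at hx; rw [hgy] at hy
    have ex : (gropeChild c ix hix, _) = (gropeChild d i0 hi0, true) :=
      (Option.some.inj hx).trans (Option.some.inj hx0).symm
    have ey : (gropeChild c iy hiy, _) = (gropeChild d i1 hi1, true) :=
      (Option.some.inj hy).trans (Option.some.inj hy1).symm
    rw [Prod.mk.injEq] at ex ey
    obtain ⟨hcd, hii⟩ := child_inj ex.1
    obtain ⟨-, hjj⟩ := child_inj ey.1
    subst hcd
    have hsx : ¬((4 * (G.deg c.1 / 2) - 1 - p) % 4 < 2) := by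
      have := ex.2; simpa using this
    have hsy : ¬((4 * (G.deg c.1 / 2) - 1 - (p + 1)) % 4 < 2) := by
      have := ey.2; simpa using this
    cases bb
    · have := hif0 rfl; have := hif1 rfl; omega
    · have := hit0 rfl; have := hit1 rfl; omega
  · obtain ⟨ix, hix, hgx, hidx⟩ := letterExp_true_get c p (by omega)
    obtain ⟨iy, hiy, hgy, hidy⟩ := letterExp_true_get c (p + 1) (by omega)
    rw [hgx] at hx; rw [hgy] at hy
    have ex : (gropeChild c ix hix, _) = (gropeChild d i0 hi0, true) :=
      (Option.some.inj hx).trans (Option.some.inj hx0).symm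
    have ey : (gropeChild c iy hiy, _) = (gropeChild d i1 hi1, true) :=
      (Option.some.inj hy).trans (Option.some.inj hy1).symm
    rw [Prod.mk.injEq] at ex ey
    obtain ⟨hcd, hii⟩ := child_inj ex.1
    obtain ⟨-, hjj⟩ := child_inj ey.1
    subst hcd
    have hsx : p % 4 < 2 := by have := ex.2; simpa using this
    have hsy : (p + 1) % 4 < 2 := by have := ey.2; simpa using this
    cases bb
    · have := hif0 rfl; have := hif1 rfl; omega
    · have := hit0 rfl; have := hit1 rfl; omega

end GropeLemma7
namespace GropeLemma7
variable {G : GropeFrame}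

lemma head?_eq_getElem?' {β : Type*} (l : List β) : l.head? = l[0]? := by
  cases l <;> simp

lemma letterExp_ne_nil {m : ℕ} (a : GropeGen G m × Bool) : letterExp G a ≠ [] := by
  have h := letterExp_length a
  have hK := half_deg_pos a.1
  intro hnil
  rw [hnil] at h
  simp only [List.length_nil] at h
  omega

lemma expInj {m : ℕ} : ∀ (A B : List (GropeGen G m × Bool)),
    (A.map (letterExp G)).flatten = (B.map (letterExp G)).flatten → A = B := by
  intro A
  induction A with
  | nil =>
    intro B h
    cases B with
    | nil => rfl
    | cons b B =>
      simp only [List.map_nil, List.flatten_nil, List.map_cons, List.flatten_cons] at h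
      exact absurd (List.append_eq_nil_iff.mp h.symm).1 (letterExp_ne_nil b)
  | cons a A ih =>
    intro B h
    cases B with
    | nil =>
      simp only [List.map_nil, List.flatten_nil, List.map_cons, List.flatten_cons] at h
      exact absurd (List.append_eq_nil_iff.mp h).1 (letterExp_ne_nil a)
    | cons b B =>
      simp only [List.map_cons, List.flatten_cons] at h
      have ha0 : 0 < (letterExp G a).length := List.length_pos_iff.mpr (letterExp_ne_nil a)
      have hb0 : 0 < (letterExp G b).length := List.length_pos_iff.mpr (letterExp_ne_nil b)
      have e0 : (letterExp G a)[0]? = (letterExp G b)[0]? := by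
        rw [← List.getElem?_append_left (l₂ := (A.map (letterExp G)).flatten) ha0,
          ← List.getElem?_append_left (l₂ := (B.map (letterExp G)).flatten) hb0, h]
      have hab : a = b :=
        letterExp_head_decode (List.getElem?_eq_getElem ha0)
          (by rw [← e0]; exact List.getElem?_eq_getElem ha0)
      subst hab
      rw [ih B (List.append_cancel_left h)]

lemma flatten_split {γ β : Type*} (F : γ → List β) :
    ∀ (A : List γ) (X Y : List β), (A.map F).flatten = X ++ Y →
    (∃ A₁ A₂, A = A₁ ++ A₂ ∧ (A₁.map F).flatten = X ∧ (A₂.map F).flatten = Y) ∨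
    (∃ (A₁ : List γ) (a : γ) (A₂ : List γ) (U V : List β),
      A = A₁ ++ a :: A₂ ∧ F a = U ++ V ∧ U ≠ [] ∧ V ≠ [] ∧
      X = (A₁.map F).flatten ++ U ∧ Y = V ++ (A₂.map F).flatten) := by
  intro A
  induction A with
  | nil =>
    intro X Y h
    simp only [List.map_nil, List.flatten_nil] at h
    obtain ⟨rfl, rfl⟩ := List.append_eq_nil_iff.mp h.symm
    exact Or.inl ⟨[], [], rfl, rfl, rfl⟩
  | cons a A ih =>
    intro X Y h
    simp only [List.map_cons, List.flatten_cons] at h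
    rcases List.append_eq_append_iff.mp h with ⟨w, hw1, hw2⟩ | ⟨w, hw1, hw2⟩
    · -- X = F a ++ w, flatten A = w ++ Y
      rcases ih w Y hw2 with ⟨A₁, A₂, rfl, h1, h2⟩ | ⟨A₁, b, A₂, U, V, rfl, hFa, hU, hV, hX, hY⟩
      · refine Or.inl ⟨a :: A₁, A₂, rfl, ?_, h2⟩
        simp only [List.map_cons, List.flatten_cons, h1, hw1]
      · refine Or.inr ⟨a :: A₁, b, A₂, U, V, rfl, hFa, hU, hV, ?_, hY⟩
        simp only [List.map_cons, List.flatten_cons, hw1, hX, List.append_assoc]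
    · -- F a = X ++ w, Y = w ++ flatten A
      rcases eq_or_ne X [] with rfl | hXne
      · refine Or.inl ⟨[], a :: A, rfl, rfl, ?_⟩
        simp only [List.map_cons, List.flatten_cons, hw2, hw1, List.nil_append]
      · rcases eq_or_ne w [] with rfl | hwne
        · refine Or.inl ⟨[a], A, rfl, ?_, ?_⟩
          · simp only [List.map_cons, List.map_nil, List.flatten_cons, List.flatten_nil,
              List.append_nil, hw1, List.append_nil]
          · rw [hw2, List.nil_append]
        · exact Or.inr ⟨[], a, A, X, w, rfl, hw1, hXne, hwne, by simp, hw2⟩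

lemma no_mid_cut {m : ℕ} {a b : GropeGen G m × Bool} {U V : List (GropeGen G (m + 1) × Bool)}
    (hUV : letterExp G a = U ++ V) (hU : U ≠ []) (hV : V ≠ [])
    (hcomp : V <+: letterExp G b ∨ letterExp G b <+: V) : False := by
  have hlenb := letterExp_length b
  have hKb := half_deg_pos b.1
  have hVpos : 0 < V.length := List.length_pos_iff.mpr hV
  have hUpos : 0 < U.length := List.length_pos_iff.mpr hU
  have hVlen : U.length + V.length = (letterExp G a).length := by rw [hUV]; simp
  have hVget : ∀ i, V[i]? = (letterExp G a)[U.length + i]? := by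
    intro i
    rw [hUV, List.getElem?_append_right (by omega)]
    congr 1
    omega
  have h0 : V[0]? = (letterExp G b)[0]? := by
    rcases hcomp with ⟨t, ht⟩ | ⟨t, ht⟩
    · rw [← ht, List.getElem?_append_left hVpos]
    · rw [← ht, List.getElem?_append_left (by omega)]
  rcases eq_or_lt_of_le (show 1 ≤ V.length from hVpos) with hV1 | hV2
  · -- V.length = 1
    have hlast : U.length + 0 = (letterExp G a).length - 1 := by omega
    have hx : (letterExp G a)[U.length + 0]? =
        some ((letterExp G a)[U.length + 0]'(by omega)) := List.getElem?_eq_getElem _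
    have hxf : ((letterExp G a)[U.length + 0]'(by omega)).2 = false := by
      apply letterExp_last_sgn (a := a)
      rw [← hlast]
      exact hx
    have hxt : ((letterExp G a)[U.length + 0]'(by omega)).2 = true := by
      apply letterExp_head_sgn (a := b)
      rw [← h0, hVget 0]
      exact hx
    rw [hxf] at hxt
    exact Bool.false_ne_true hxt
  · -- V.length ≥ 2
    have h1 : V[1]? = (letterExp G b)[1]? := by
      rcases hcomp with ⟨t, ht⟩ | ⟨t, ht⟩
      · rw [← ht, List.getElem?_append_left hV2]
      · rw [← ht, List.getElem?_append_left (by omega)]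
    have hx : (letterExp G a)[U.length + 0]? =
        some ((letterExp G a)[U.length + 0]'(by omega)) := List.getElem?_eq_getElem _
    have hy : (letterExp G a)[(U.length + 0) + 1]? =
        some ((letterExp G a)[(U.length + 0) + 1]'(by omega)) := List.getElem?_eq_getElem _
    have hy' : (letterExp G a)[U.length + 1]? =
        some ((letterExp G a)[(U.length + 0) + 1]'(by omega)) := by
      rw [← hy]
    apply pair_no_start (p := U.length + 0) (by omega) hx hy
    · rw [← h0, hVget 0]; exact hx
    · rw [← h1, hVget 1]; exact hy'

lemma one_step_split {m : ℕ} (A B : List (GropeGen G m × Bool))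
    (X Y : List (GropeGen G (m + 1) × Bool))
    (hA : (A.map (letterExp G)).flatten = X ++ Y)
    (hB : (B.map (letterExp G)).flatten = Y ++ X) :
    ∃ A₁ A₂, A = A₁ ++ A₂ ∧ (A₁.map (letterExp G)).flatten = X ∧
      (A₂.map (letterExp G)).flatten = Y ∧ B = A₂ ++ A₁ := by
  rcases flatten_split (letterExp G) A X Y hA with
    ⟨A₁, A₂, rfl, h1, h2⟩ | ⟨A₁, a, A₂, U, V, rfl, hFa, hU, hV, hX, hY⟩
  · refine ⟨A₁, A₂, rfl, h1, h2, ?_⟩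
    apply expInj
    rw [hB, List.map_append, List.flatten_append, h1, h2]
  · exfalso
    rw [hX, hY] at hB
    cases B with
    | nil =>
      simp only [List.map_nil, List.flatten_nil] at hB
      have := congrArg List.length hB
      simp only [List.length_nil, List.length_append] at this
      have := List.length_pos_iff.mpr hV
      omega
    | cons b B' =>
      simp only [List.map_cons, List.flatten_cons, List.append_assoc] at hB
      have hcomp : V <+: letterExp G b ∨ letterExp G b <+: V := by
        rcases List.append_eq_append_iff.mp hB.symm with ⟨w, hw1, -⟩ | ⟨w, hw1, -⟩
        · exact Or.inl ⟨w, hw1.symm⟩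
        · exact Or.inr ⟨w, hw1.symm⟩
      exact no_mid_cut hFa hU hV hcomp

lemma exp1_reduced {m : ℕ} {w : List (GropeGen G m × Bool)} (hw : IsReducedWord w) :
    IsReducedWord ((w.map (letterExp G)).flatten) := by
  have hnil : [] ∉ w.map (letterExp G) := by
    intro hmem
    obtain ⟨a, -, ha⟩ := List.mem_map.mp hmem
    exact letterExp_ne_nil a ha
  rw [IsReducedWord, List.Chain', List.isChain_flatten hnil]
  constructor
  · intro l hl
    obtain ⟨a, -, rfl⟩ := List.mem_map.mp hl
    rw [List.isChain_iff_getElem]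
    intro i hilt
    have h1 : (letterExp G a)[i]? = some ((letterExp G a).get ⟨i, by omega⟩) := by
      rw [List.get_eq_getElem]
      exact List.getElem?_eq_getElem _
    have h2 : (letterExp G a)[i + 1]? = some ((letterExp G a).get ⟨i + 1, by omega⟩) := by
      rw [List.get_eq_getElem]
      exact List.getElem?_eq_getElem _
    intro hcon
    exact letterExp_inner_neq h1 h2 hcon.1
  · rw [List.isChain_map]
    refine List.IsChain.imp ?_ hw
    intro a b hab x hx y hy
    rw [Option.mem_def, List.getLast?_eq_getElem?] at hx
    rw [Option.mem_def, head?_eq_getElem?'] at hy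
    exact letterExp_junction hab hx hy

end GropeLemma7
namespace GropeLemma7
variable {G : GropeFrame}

lemma wordExp_refl {m : ℕ} (w : List (GropeGen G m × Bool)) :
    wordExp G (le_refl m) w = w := by unfold wordExp; exact Nat.leRecOn_self (C := fun k => List (GropeGen G k × Bool)) w

lemma wordExp_succ {m n : ℕ} (h : m ≤ n) {h2 : m ≤ n + 1} (w : List (GropeGen G m × Bool)) :
    wordExp G h2 w = ((wordExp G h w).map (letterExp G)).flatten := by
  unfold wordExp; exact Nat.leRecOn_succ (C := fun k => List (GropeGen G k × Bool)) h w

lemma gropeEle_refl {m : ℕ} (x : FreeGroup (GropeGen G m)) :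
    gropeEle G (le_refl m) x = x := by unfold gropeEle; exact Nat.leRecOn_self (C := fun k => FreeGroup (GropeGen G k)) x

lemma gropeEle_succ {m n : ℕ} (h : m ≤ n) {h2 : m ≤ n + 1} (x : FreeGroup (GropeGen G m)) :
    gropeEle G h2 x = gropeE G n (gropeEle G h x) := by
  unfold gropeEle; exact Nat.leRecOn_succ (C := fun k => FreeGroup (GropeGen G k)) h x

lemma multi_split {m : ℕ} : ∀ (n : ℕ) (h : m ≤ n) (A B : List (GropeGen G m × Bool))
    (X Y : List (GropeGen G n × Bool)),
    wordExp G h A = X ++ Y → wordExp G h B = Y ++ X →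
    ∃ A₁ A₂, A = A₁ ++ A₂ ∧ wordExp G h A₁ = X ∧ wordExp G h A₂ = Y ∧ B = A₂ ++ A₁ := by
  intro n h
  induction n, h using Nat.le_induction with
  | base =>
    intro A B X Y hA hB
    rw [wordExp_refl] at hA hB
    exact ⟨X, Y, hA, wordExp_refl X, wordExp_refl Y, hB⟩
  | succ n hmn ih =>
    intro A B X Y hA hB
    rw [wordExp_succ hmn] at hA hB
    obtain ⟨P, Q, hPQ, hP, hQ, hBPQ⟩ :=
      one_step_split (wordExp G hmn A) (wordExp G hmn B) X Y hA hB
    obtain ⟨A₁, A₂, rfl, e1, e2, e3⟩ := ih A B P Q hPQ hBPQ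
    refine ⟨A₁, A₂, rfl, ?_, ?_, e3⟩
    · rw [wordExp_succ hmn, e1, hP]
    · rw [wordExp_succ hmn, e2, hQ]

lemma wordExp_reduced {m : ℕ} : ∀ (n : ℕ) (h : m ≤ n) (w : List (GropeGen G m × Bool)),
    IsReducedWord w → IsReducedWord (wordExp G h w) := by
  intro n h
  induction n, h using Nat.le_induction with
  | base => intro w hw; rw [wordExp_refl]; exact hw
  | succ n hmn ih =>
    intro w hw
    rw [wordExp_succ hmn]
    exact exp1_reduced (ih w hw)

lemma commutator_mk {α : Type*} (x y : α) :
    ⁅FreeGroup.of x, FreeGroup.of y⁆ =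
      FreeGroup.mk [(x, true), (y, true), (x, false), (y, false)] := by
  rw [commutatorElement_def,
    show FreeGroup.of x = FreeGroup.mk [(x, true)] from rfl,
    show FreeGroup.of y = FreeGroup.mk [(y, true)] from rfl,
    FreeGroup.inv_mk, FreeGroup.inv_mk, FreeGroup.mul_mk, FreeGroup.mul_mk, FreeGroup.mul_mk]
  rfl

lemma prod_ofFn_commutator {α : Type*} : ∀ (k : ℕ) (u v : Fin k → α),
    (List.ofFn fun j => ⁅FreeGroup.of (u j), FreeGroup.of (v j)⁆).prod =
    FreeGroup.mk
      ((List.ofFn fun j => [(u j, true), (v j, true), (u j, false), (v j, false)]).flatten) := by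
  intro k
  induction k with
  | zero =>
    intro u v
    simp only [List.ofFn_zero, List.prod_nil, List.flatten_nil]
    exact FreeGroup.one_eq_mk
  | succ k ih =>
    intro u v
    simp only [List.ofFn_succ, List.prod_cons, List.flatten_cons]
    rw [commutator_mk, ih (fun j => u j.succ) (fun j => v j.succ), FreeGroup.mul_mk]

lemma gropeE_of {m : ℕ} (c : GropeGen G m) :
    gropeE G m (FreeGroup.of c) = FreeGroup.mk (letterExp G (c, true)) := by
  rw [gropeE, FreeGroup.lift_apply_of, letterExp_true]
  exact prod_ofFn_commutator _ _ _

lemma gropeE_mk {m : ℕ} (w : List (GropeGen G m × Bool)) :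
    gropeE G m (FreeGroup.mk w) = FreeGroup.mk ((w.map (letterExp G)).flatten) := by
  induction w with
  | nil =>
    simp only [List.map_nil, List.flatten_nil]
    rw [show (FreeGroup.mk [] : FreeGroup (GropeGen G m)) = 1 from FreeGroup.one_eq_mk.symm,
      show (FreeGroup.mk [] : FreeGroup (GropeGen G (m + 1))) = 1 from FreeGroup.one_eq_mk.symm,
      map_one]
  | cons a w ih =>
    have hsingle : gropeE G m (FreeGroup.mk [a]) = FreeGroup.mk (letterExp G a) := by
      rcases a with ⟨c, b⟩
      cases b
      · have h1 : FreeGroup.mk [(c, false)] = (FreeGroup.of c)⁻¹ := by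
          rw [show FreeGroup.of c = FreeGroup.mk [(c, true)] from rfl, FreeGroup.inv_mk]
          rfl
        rw [h1, map_inv, gropeE_of, FreeGroup.inv_mk, letterExp_false]
        rfl
      · exact gropeE_of c
    rw [show (a :: w) = [a] ++ w from rfl, ← FreeGroup.mul_mk, map_mul, ih, hsingle,
      FreeGroup.mul_mk]
    simp only [List.map_cons, List.flatten_cons, List.map_append, List.flatten_append,
      List.singleton_append]

lemma gropeEle_mk {m : ℕ} : ∀ (n : ℕ) (h : m ≤ n) (w : List (GropeGen G m × Bool)),
    gropeEle G h (FreeGroup.mk w) = FreeGroup.mk (wordExp G h w) := by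
  intro n h
  induction n, h using Nat.le_induction with
  | base => intro w; rw [gropeEle_refl, wordExp_refl]
  | succ n hmn ih =>
    intro w
    rw [gropeEle_succ hmn, wordExp_succ hmn, ih, gropeE_mk]

lemma isReduced_reduce {α : Type*} [DecidableEq α] (L : List (α × Bool)) :
    IsReducedWord (FreeGroup.reduce L) := by
  induction L with
  | nil => exact List.isChain_nil
  | cons x L ih =>
    rw [FreeGroup.reduce.cons]
    cases hL : FreeGroup.reduce L with
    | nil => exact List.isChain_singleton x
    | cons y t =>
      rw [hL] at ih
      show IsReducedWord (if x.1 = y.1 ∧ x.2 = !y.2 then t else x :: y :: t)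
      by_cases hxy : x.1 = y.1 ∧ x.2 = !y.2
      · rw [if_pos hxy]
        exact ih.tail
      · rw [if_neg hxy]
        refine List.isChain_cons_cons.mpr ⟨?_, ih⟩
        intro hc
        exact hxy ⟨hc.1, by rcases x with ⟨x1, (_|_)⟩ <;> rcases y with ⟨y1, (_|_)⟩ <;>
          simp_all⟩

lemma reduce_eq_self {α : Type*} [DecidableEq α] {L : List (α × Bool)}
    (h : IsReducedWord L) : FreeGroup.reduce L = L := by
  induction L with
  | nil => rfl
  | cons x L ih =>
    have ht : FreeGroup.reduce L = L := ih h.tail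
    rw [FreeGroup.reduce.cons, ht]
    cases L with
    | nil => rfl
    | cons y t =>
      have hxy : ¬(x.1 = y.1 ∧ y.2 = !x.2) := (List.isChain_cons_cons.mp h).1
      show (if x.1 = y.1 ∧ x.2 = !y.2 then t else x :: y :: t) = x :: y :: t
      rw [if_neg]
      intro hc
      exact hxy ⟨hc.1, by rcases x with ⟨x1, (_|_)⟩ <;> rcases y with ⟨y1, (_|_)⟩ <;> simp_all⟩

lemma reduced_unique {α : Type*} [DecidableEq α] {L₁ L₂ : List (α × Bool)}
    (h1 : IsReducedWord L₁) (h2 : IsReducedWord L₂)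
    (h : FreeGroup.mk L₁ = FreeGroup.mk L₂) : L₁ = L₂ := by
  have hs := FreeGroup.reduce.sound h
  rwa [reduce_eq_self h1, reduce_eq_self h2] at hs

lemma isReduced_toWord {α : Type*} [DecidableEq α] (x : FreeGroup α) :
    IsReducedWord x.toWord := by
  rw [← FreeGroup.reduce_toWord x]
  exact isReduced_reduce _

end GropeLemma7
open GropeLemma7

/-- **Lemma 7 (transform).** Let `m ≤ n` and let `XY` and `YX` be reduced words in
`𝒲(E_n)`. If `XY` and `YX` belong to `F_m`, then both `X` and `Y` belong to `F_m`. -/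
theorem memF_of_transform (G : GropeFrame) {m n : ℕ} (h : m ≤ n)
    (X Y : List (GropeGen G n × Bool))
    (hredXY : IsReducedWord (X ++ Y)) (hredYX : IsReducedWord (Y ++ X))
    (hmemXY : MemF G m (FreeGroup.mk (X ++ Y)))
    (hmemYX : MemF G m (FreeGroup.mk (Y ++ X))) :
    MemF G m (FreeGroup.mk X) ∧ MemF G m (FreeGroup.mk Y) := by
  obtain ⟨h1, xA, hxA⟩ := hmemXY
  obtain ⟨h2, xB, hxB⟩ := hmemYX
  have hxB' : gropeEle G h1 xB = FreeGroup.mk (Y ++ X) := hxB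
  have hredA : IsReducedWord (FreeGroup.toWord xA) := isReduced_toWord xA
  have hredB : IsReducedWord (FreeGroup.toWord xB) := isReduced_toWord xB
  have hA : wordExp G h1 (FreeGroup.toWord xA) = X ++ Y := by
    refine reduced_unique (wordExp_reduced n h1 _ hredA) hredXY ?_
    rw [← gropeEle_mk n h1, FreeGroup.mk_toWord, hxA]
  have hB : wordExp G h1 (FreeGroup.toWord xB) = Y ++ X := by
    refine reduced_unique (wordExp_reduced n h1 _ hredB) hredYX ?_
    rw [← gropeEle_mk n h1, FreeGroup.mk_toWord, hxB']
  obtain ⟨A₁, A₂, hw, e1, e2, -⟩ :=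
    multi_split n h1 (FreeGroup.toWord xA) (FreeGroup.toWord xB) X Y hA hB
  constructor
  · exact ⟨h1, FreeGroup.mk A₁, by rw [gropeEle_mk n h1, e1]⟩
  · exact ⟨h1, FreeGroup.mk A₂, by rw [gropeEle_mk n h1, e2]⟩
end

section
/- Let S be a grope frame, m < n, and A, B, C ∈ W(E_n) reduced words (possibly empty) such that ABA⁻CB⁻C⁻ ≠ e in F_n and both AB and A⁻CB⁻C⁻ are reduced words. Then: (3.1) if A ≡ A₀B, then A₀B and A₀⁻CB⁻C⁻ are reduced, A₀BA₀⁻CB⁻C⁻ = ABA⁻CB⁻C⁻ in F_n, and if in addition A₀BA₀⁻, CB⁻C⁻ ∈ F_m then ABA⁻, CB⁻C⁻ ∈ F_m; (3.2) if B ≡ B₀A, then AB₀ and CA⁻B₀⁻C⁻ are reduced, AB₀CA⁻B₀⁻C⁻ = ABA⁻CB⁻C⁻ in F_n, and if in addition AB₀, CA⁻B₀⁻C⁻ ∈ F_m then ABA⁻, CB⁻C⁻ ∈ F_m; (3.3) if B ≡ B₀Z and A ≡ A₀Z for non-empty words A₀, B₀ and B₀A₀⁻ is reduced, then A₀ZB₀A₀⁻CZ⁻B₀⁻C⁻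 is reduced, and if in addition A₀ZB₀A₀⁻, CZ⁻B₀⁻C⁻ ∈ F_m then ABA⁻, CB⁻C⁻ ∈ F_m. -/
open scoped commutatorElement

/-! Auxiliary lemmas for the proof of Lemma 12. -/

theorem wordInv_append {α : Type*} (u v : List (α × Bool)) :
    wordInv (u ++ v) = wordInv v ++ wordInv u := by
  simp [wordInv]

theorem wordInv_ne_nil {α : Type*} {w : List (α × Bool)} (h : w ≠ []) :
    wordInv w ≠ [] := by
  simpa [wordInv] using h

theorem mk_append' {α : Type*} (u v : List (α × Bool)) :
    FreeGroup.mk (u ++ v) = FreeGroup.mk u * FreeGroup.mk v :=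
  FreeGroup.mul_mk.symm

theorem mk_wordInv {α : Type*} (u : List (α × Bool)) :
    FreeGroup.mk (wordInv u) = (FreeGroup.mk u)⁻¹ := by
  rw [FreeGroup.inv_mk]; rfl

theorem memF_of_eq {G : GropeFrame} {m n : ℕ} {v w : FreeGroup (GropeGen G n)}
    (h : v = w) : MemF G m v → MemF G m w := fun hv => h ▸ hv

theorem chain'_glue {α : Type*} {R : α → α → Prop} {u v w : List α} (hv : v ≠ [])
    (h1 : List.Chain' R (u ++ v)) (h2 : List.Chain' R (v ++ w)) :
    List.Chain' R (u ++ v ++ w) := by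
  unfold List.Chain' at h1 h2 ⊢
  rw [List.append_assoc, List.isChain_append]
  rw [List.isChain_append] at h1
  refine ⟨h1.1, h2, fun x hx y hy => h1.2.2 x hx y ?_⟩
  cases v with
  | nil => exact absurd rfl hv
  | cons a t => simpa using hy

/-- **Lemma 12 (induction3).** Let `m < n` and let `A, B, C ∈ 𝒲(E_n)` be reduced words
(possibly empty) with `ABA⁻CB⁻C⁻ ≠ e` such that `AB` and `A⁻CB⁻C⁻` are reduced words.
Then (3.1)–(3.3) hold. -/
theorem induction3 (G : GropeFrame) {m n : ℕ} (hmn : m < n)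
    (A B C : List (GropeGen G n × Bool))
    (hAred : IsReducedWord A) (hBred : IsReducedWord B) (hCred : IsReducedWord C)
    (hne : FreeGroup.mk (A ++ B ++ wordInv A ++ C ++ wordInv B ++ wordInv C) ≠ 1)
    (hred1 : IsReducedWord (A ++ B))
    (hred2 : IsReducedWord (wordInv A ++ C ++ wordInv B ++ wordInv C)) :
    -- (3.1)
    (∀ A₀, A = A₀ ++ B →
      IsReducedWord (A₀ ++ B) ∧
      IsReducedWord (wordInv A₀ ++ C ++ wordInv B ++ wordInv C) ∧
      FreeGroup.mk (A₀ ++ B ++ wordInv A₀ ++ C ++ wordInv B ++ wordInv C) =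
        FreeGroup.mk (A ++ B ++ wordInv A ++ C ++ wordInv B ++ wordInv C) ∧
      (MemF G m (FreeGroup.mk (A₀ ++ B ++ wordInv A₀)) →
        MemF G m (FreeGroup.mk (C ++ wordInv B ++ wordInv C)) →
        MemF G m (FreeGroup.mk (A ++ B ++ wordInv A)) ∧
        MemF G m (FreeGroup.mk (C ++ wordInv B ++ wordInv C)))) ∧
    -- (3.2)
    (∀ B₀, B = B₀ ++ A →
      IsReducedWord (A ++ B₀) ∧
      IsReducedWord (C ++ wordInv A ++ wordInv B₀ ++ wordInv C) ∧
      FreeGroup.mk (A ++ B₀ ++ C ++ wordInv A ++ wordInv B₀ ++ wordInv C) =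
        FreeGroup.mk (A ++ B ++ wordInv A ++ C ++ wordInv B ++ wordInv C) ∧
      (MemF G m (FreeGroup.mk (A ++ B₀)) →
        MemF G m (FreeGroup.mk (C ++ wordInv A ++ wordInv B₀ ++ wordInv C)) →
        MemF G m (FreeGroup.mk (A ++ B ++ wordInv A)) ∧
        MemF G m (FreeGroup.mk (C ++ wordInv B ++ wordInv C)))) ∧
    -- (3.3)
    (∀ A₀ B₀ Z, B = B₀ ++ Z → A = A₀ ++ Z → A₀ ≠ [] → B₀ ≠ [] →
      IsReducedWord (B₀ ++ wordInv A₀) →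
      IsReducedWord (A₀ ++ Z ++ B₀ ++ wordInv A₀ ++ C ++ wordInv Z ++ wordInv B₀ ++ wordInv C) ∧
      (MemF G m (FreeGroup.mk (A₀ ++ Z ++ B₀ ++ wordInv A₀)) →
        MemF G m (FreeGroup.mk (C ++ wordInv Z ++ wordInv B₀ ++ wordInv C)) →
        MemF G m (FreeGroup.mk (A ++ B ++ wordInv A)) ∧
        MemF G m (FreeGroup.mk (C ++ wordInv B ++ wordInv C)))) := by
  clear hne
  refine ⟨?_, ?_, ?_⟩
  · -- (3.1)
    intro A₀ hA
    subst hA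
    refine ⟨hAred, ?_, ?_, ?_⟩
    · exact hred2.suffix ⟨wordInv B, by simp [wordInv_append, List.append_assoc]⟩
    · simp only [mk_append', mk_wordInv]
      group
    · intro h1 h2
      exact ⟨memF_of_eq (by simp only [mk_append', mk_wordInv]; group) h1, h2⟩
  · -- (3.2)
    intro B₀ hB
    subst hB
    refine ⟨?_, ?_, ?_, ?_⟩
    · exact hred1.prefix ⟨A, by simp [List.append_assoc]⟩
    · exact hred2.suffix ⟨wordInv A, by simp [wordInv_append, List.append_assoc]⟩
    · simp only [mk_append', mk_wordInv]
      group
    · intro h1 h2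
      exact ⟨memF_of_eq (by simp only [mk_append', mk_wordInv]; group) h1,
        memF_of_eq (by simp only [mk_append', mk_wordInv]; group) h2⟩
  · -- (3.3)
    intro A₀ B₀ Z hB hA hA₀ hB₀ hred3
    subst hA
    subst hB
    constructor
    · have h4 : IsReducedWord (A₀ ++ Z ++ B₀) :=
        hred1.prefix ⟨Z, by simp [List.append_assoc]⟩
      have h5 : IsReducedWord (A₀ ++ Z ++ B₀ ++ wordInv A₀) :=
        chain'_glue hB₀ h4 hred3
      have h6 : IsReducedWord
          (wordInv A₀ ++ (C ++ wordInv Z ++ wordInv B₀ ++ wordInv C)) :=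
        hred2.suffix ⟨wordInv Z, by simp [wordInv_append, List.append_assoc]⟩
      have h7 := chain'_glue (wordInv_ne_nil hA₀) h5 h6
      simp only [IsReducedWord, List.append_assoc] at h7 ⊢
      exact h7
    · intro h1 h2
      exact ⟨memF_of_eq (by simp only [mk_append', mk_wordInv]; group) h1,
        memF_of_eq (by simp only [mk_append', mk_wordInv]; group) h2⟩
end

section
/- Let F be a free group on a set C of free generators and let c, d ∈ C be distinct generators. If [c,d] = [u,v] for some u, v ∈ F, then neither u nor v belongs to the commutator subgroup [F,F] of F. -/
structure Heis where
  x : ℤ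
  y : ℤ
  z : ℤ

namespace Heis

@[ext] lemma ext' {a b : Heis} (h1 : a.x = b.x) (h2 : a.y = b.y) (h3 : a.z = b.z) : a = b := by
  cases a; cases b; simp_all

instance : Mul Heis := ⟨fun a b => ⟨a.x + b.x, a.y + b.y, a.z + b.z + a.x * b.y⟩⟩
instance : One Heis := ⟨⟨0, 0, 0⟩⟩
instance : Inv Heis := ⟨fun a => ⟨-a.x, -a.y, a.x * a.y - a.z⟩⟩

@[simp] lemma mul_x (a b : Heis) : (a * b).x = a.x + b.x := rfl
@[simp] lemma mul_y (a b : Heis) : (a * b).y = a.y + b.y := rfl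
@[simp] lemma mul_z (a b : Heis) : (a * b).z = a.z + b.z + a.x * b.y := rfl
@[simp] lemma inv_x (a : Heis) : (a⁻¹).x = -a.x := rfl
@[simp] lemma inv_y (a : Heis) : (a⁻¹).y = -a.y := rfl
@[simp] lemma inv_z (a : Heis) : (a⁻¹).z = a.x * a.y - a.z := rfl
@[simp] lemma one_x : (1 : Heis).x = 0 := rfl
@[simp] lemma one_y : (1 : Heis).y = 0 := rfl
@[simp] lemma one_z : (1 : Heis).z = 0 := rfl

instance : Group Heis where
  mul_assoc a b c := by apply ext' <;> simp <;> ring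
  one_mul a := by apply ext' <;> simp
  mul_one a := by apply ext' <;> simp
  inv_mul_cancel a := by apply ext' <;> simp <;> ring

def K : Subgroup Heis where
  carrier := {a | a.x = 0 ∧ a.y = 0}
  one_mem' := ⟨rfl, rfl⟩
  mul_mem' := by rintro a b ⟨h1, h2⟩ ⟨h3, h4⟩; simp_all
  inv_mem' := by rintro a ⟨h1, h2⟩; simp_all

lemma comm_central (a : Heis) (ha : a ∈ commutator Heis) : a ∈ Subgroup.center Heis := by
  have hk : a ∈ K := by
    have : commutator Heis ≤ K := by
      rw [commutator, Subgroup.commutator_le]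
      intro g _ h _
      constructor <;> simp [commutatorElement_def] <;> ring
    exact this ha
  obtain ⟨hx, hy⟩ := hk
  rw [Subgroup.mem_center_iff]
  intro g
  apply ext' <;> simp [hx, hy] <;> ring

end Heis

open scoped commutatorElement

/-- **Lemma 18 (free1).** Let `F` be a free group on a set `C` and `c, d ∈ C` be
distinct generators. If `[c,d] = [u,v]` for `u, v ∈ F`, then neither `u` nor `v`
belongs to the commutator subgroup of `F`. -/
theorem free1 {α : Type*} (c d : α) (hcd : c ≠ d) (u v : FreeGroup α)
    (h : ⁅FreeGroup.of c, FreeGroup.of d⁆ = ⁅u, v⁆) :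
    u ∉ commutator (FreeGroup α) ∧ v ∉ commutator (FreeGroup α) := by
  classical
  set f : α → Heis := fun a => if a = c then ⟨1,0,0⟩ else if a = d then ⟨0,1,0⟩ else 1 with hf
  set φ : FreeGroup α →* Heis := FreeGroup.lift f with hφ
  have hφc : φ (FreeGroup.of c) = ⟨1,0,0⟩ := by simp [hφ, hf]
  have hφd : φ (FreeGroup.of d) = ⟨0,1,0⟩ := by simp [hφ, hf, hcd.symm]
  have hmap : (φ ⁅FreeGroup.of c, FreeGroup.of d⁆).z = 1 := by
    rw [commutatorElement_def]
    simp [hφc, hφd]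
  have key : ∀ w : FreeGroup α, w ∈ commutator (FreeGroup α) →
      φ w ∈ Subgroup.center Heis := by
    intro w hw
    apply Heis.comm_central
    have : (commutator (FreeGroup α)).map φ ≤ commutator Heis := by
      rw [commutator, commutator, Subgroup.map_commutator]
      exact Subgroup.commutator_mono le_top le_top
    exact this ⟨w, hw, rfl⟩
  constructor
  · intro hu
    have hc := Subgroup.mem_center_iff.mp (key u hu) (φ v)
    have h1 : φ ⁅u, v⁆ = 1 := by
      rw [commutatorElement_def]
      simp only [map_mul, map_inv]
      rw [← hc]
      group
    rw [← h] at h1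
    rw [h1] at hmap
    simp at hmap
  · intro hv
    have hc := Subgroup.mem_center_iff.mp (key v hv) (φ u)
    have h1 : φ ⁅u, v⁆ = 1 := by
      rw [commutatorElement_def]
      simp only [map_mul, map_inv]
      rw [hc]
      group
    rw [← h] at h1
    rw [h1] at hmap
    simp at hmap
end

section
/- Let F be a free group on a set B of free generators and let b₀, b₁ ∈ B be distinct. Suppose c, d ∈ {b, b⁻¹ : b ∈ B} and [b₀,b₁] = [x⁻¹cx, y⁻¹dy] for some x, y ∈ F. Then c, d ∈ {b₀, b₀⁻¹, b₁, b₁⁻¹}, and moreover c ∈ {b₀, b₀⁻¹} if and only if d ∈ {b₁, b₁⁻¹}, and c ∈ {b₁, b₁⁻¹} if and only if d ∈ {b₀, b₀⁻¹}. -/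
open scoped commutatorElement
set_option linter.unreachableTactic false
set_option linter.unusedTactic false
set_option linter.unnecessarySeqFocus false

@[ext] structure Heis_s18 where
  a : ℤ
  b : ℤ
  t : ℤ

namespace Heis_s18

instance inst_s18 : Mul Heis_s18 := ⟨fun u v => ⟨u.a + v.a, u.b + v.b, u.t + v.t + u.a * v.b⟩⟩
instance inst_s18_2 : One Heis_s18 := ⟨⟨0, 0, 0⟩⟩
instance inst_s18_3 : Inv Heis_s18 := ⟨fun u => ⟨-u.a, -u.b, -u.t + u.a * u.b⟩⟩

@[simp] lemma mul_a (u v : Heis_s18) : (u * v).a = u.a + v.a := rfl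
@[simp] lemma mul_b (u v : Heis_s18) : (u * v).b = u.b + v.b := rfl
@[simp] lemma mul_t (u v : Heis_s18) : (u * v).t = u.t + v.t + u.a * v.b := rfl
@[simp] lemma one_a : (1 : Heis_s18).a = 0 := rfl
@[simp] lemma one_b : (1 : Heis_s18).b = 0 := rfl
@[simp] lemma one_t : (1 : Heis_s18).t = 0 := rfl
@[simp] lemma inv_a (u : Heis_s18) : u⁻¹.a = -u.a := rfl
@[simp] lemma inv_b (u : Heis_s18) : u⁻¹.b = -u.b := rfl
@[simp] lemma inv_t (u : Heis_s18) : u⁻¹.t = -u.t + u.a * u.b := rfl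

instance inst_s18_4 : Group Heis_s18 where
  mul_assoc u v w := by ext <;> simp <;> ring_nf
  one_mul u := by ext <;> simp
  mul_one u := by ext <;> simp
  inv_mul_cancel u := by ext <;> simp <;> ring_nf

lemma comm_t (u v : Heis_s18) : ⁅u, v⁆.t = u.a * v.b - v.a * u.b := by
  simp [commutatorElement_def]; ring

lemma comm_conj (x u y v : Heis_s18) : ⁅x⁻¹ * u * x, y⁻¹ * v * y⁆ = ⁅u, v⁆ := by
  ext <;> simp [commutatorElement_def] <;> ring_nf

end Heis_s18

/-- **Lemma 19 (free2).** Let `F` be a free group on a set `B` and `b₀, b₁ ∈ B` be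
distinct. If `c, d ∈ {b, b⁻¹ : b ∈ B}` and `[b₀,b₁] = [x⁻¹cx, y⁻¹dy]` for `x, y ∈ F`,
then `c, d ∈ {b₀, b₀⁻¹, b₁, b₁⁻¹}`, and moreover `c ∈ {b₀, b₀⁻¹}` iff
`d ∈ {b₁, b₁⁻¹}`, and `c ∈ {b₁, b₁⁻¹}` iff `d ∈ {b₀, b₀⁻¹}`. -/
theorem free2 {β : Type*} (b₀ b₁ : β) (hb : b₀ ≠ b₁) (c d : FreeGroup β)
    (hc : ∃ b : β, c = FreeGroup.of b ∨ c = (FreeGroup.of b)⁻¹)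
    (hd : ∃ b : β, d = FreeGroup.of b ∨ d = (FreeGroup.of b)⁻¹)
    (x y : FreeGroup β)
    (h : ⁅FreeGroup.of b₀, FreeGroup.of b₁⁆ = ⁅x⁻¹ * c * x, y⁻¹ * d * y⁆) :
    c ∈ ({FreeGroup.of b₀, (FreeGroup.of b₀)⁻¹, FreeGroup.of b₁, (FreeGroup.of b₁)⁻¹} :
      Set (FreeGroup β)) ∧
    d ∈ ({FreeGroup.of b₀, (FreeGroup.of b₀)⁻¹, FreeGroup.of b₁, (FreeGroup.of b₁)⁻¹} :
      Set (FreeGroup β)) ∧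
    ((c = FreeGroup.of b₀ ∨ c = (FreeGroup.of b₀)⁻¹) ↔
      (d = FreeGroup.of b₁ ∨ d = (FreeGroup.of b₁)⁻¹)) ∧
    ((c = FreeGroup.of b₁ ∨ c = (FreeGroup.of b₁)⁻¹) ↔
      (d = FreeGroup.of b₀ ∨ d = (FreeGroup.of b₀)⁻¹)) := by
  classical
  set G : β → Heis_s18 := fun b => if b = b₀ then ⟨1,0,0⟩ else if b = b₁ then ⟨0,1,0⟩ else 1
    with hG
  set φ : FreeGroup β →* Heis_s18 := FreeGroup.lift G with hφ
  have hφ0 : φ (FreeGroup.of b₀) = ⟨1,0,0⟩ := by simp [hφ, hG]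
  have hφ1 : φ (FreeGroup.of b₁) = ⟨0,1,0⟩ := by simp [hφ, hG, hb.symm]
  -- push the hypothesis through φ
  have key := congrArg φ h
  rw [map_commutatorElement, map_commutatorElement, map_mul, map_mul, map_mul, map_mul,
    map_inv, map_inv, Heis_s18.comm_conj, hφ0, hφ1] at key
  have E : (φ c).a * (φ d).b - (φ d).a * (φ c).b = 1 := by
    have := congrArg Heis_s18.t key
    rw [Heis_s18.comm_t, Heis_s18.comm_t] at this
    simpa using this.symm
  -- distinctness facts
  have h01 : FreeGroup.of b₀ ≠ FreeGroup.of b₁ := fun e => hb (FreeGroup.of_injective e)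
  have h02 : FreeGroup.of b₀ ≠ (FreeGroup.of b₁)⁻¹ := by
    intro e
    have := congrArg Heis_s18.a (congrArg φ e)
    rw [map_inv, hφ0, hφ1] at this
    simp at this
  have h03 : (FreeGroup.of b₀)⁻¹ ≠ FreeGroup.of b₁ := by
    intro e
    have := congrArg Heis_s18.a (congrArg φ e)
    rw [map_inv, hφ0, hφ1] at this
    simp at this
  have h04 : (FreeGroup.of b₀)⁻¹ ≠ (FreeGroup.of b₁)⁻¹ := fun e =>
    h01 (inv_injective e)
  -- classification of elements of the form (of b)^{±1}
  have val : ∀ e : FreeGroup β, (∃ b : β, e = FreeGroup.of b ∨ e = (FreeGroup.of b)⁻¹) →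
      ((e = FreeGroup.of b₀ ∨ e = (FreeGroup.of b₀)⁻¹) ∧
        ((φ e).a = 1 ∨ (φ e).a = -1) ∧ (φ e).b = 0) ∨
      ((e = FreeGroup.of b₁ ∨ e = (FreeGroup.of b₁)⁻¹) ∧
        (φ e).a = 0 ∧ ((φ e).b = 1 ∨ (φ e).b = -1)) ∨
      ((φ e).a = 0 ∧ (φ e).b = 0) := by
    rintro e ⟨b, rfl | rfl⟩ <;> by_cases h1 : b = b₀
    · subst h1; left; simp [hφ, hG]
    · by_cases h2 : b = b₁
      · subst h2; right; left; simp [hφ, hG, h1]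
      · right; right; simp [hφ, hG, h1, h2]
    · subst h1; left; simp [hφ, hG]
    · by_cases h2 : b = b₁
      · subst h2; right; left; simp [hφ, hG, h1]
      · right; right; simp [hφ, hG, h1, h2]
  have excl : ∀ e : FreeGroup β,
      (e = FreeGroup.of b₀ ∨ e = (FreeGroup.of b₀)⁻¹) →
      (e = FreeGroup.of b₁ ∨ e = (FreeGroup.of b₁)⁻¹) → False := by
    rintro e (rfl | rfl) (e2 | e2)
    · exact h01 e2
    · exact h02 e2
    · exact h03 e2
    · exact h04 e2
  have key2 :
      ((c = FreeGroup.of b₀ ∨ c = (FreeGroup.of b₀)⁻¹) ∧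
        (d = FreeGroup.of b₁ ∨ d = (FreeGroup.of b₁)⁻¹)) ∨
      ((c = FreeGroup.of b₁ ∨ c = (FreeGroup.of b₁)⁻¹) ∧
        (d = FreeGroup.of b₀ ∨ d = (FreeGroup.of b₀)⁻¹)) := by
    rcases val c hc with ⟨tc, pc, qc⟩ | ⟨tc, pc, qc⟩ | ⟨pc, qc⟩ <;>
      rcases val d hd with ⟨td, pd, qd⟩ | ⟨td, pd, qd⟩ | ⟨pd, qd⟩
    · exfalso; rw [qc, qd] at E; simp at E
    · exact Or.inl ⟨tc, td⟩
    · exfalso; rw [qc, qd] at E; simp at E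
    · exact Or.inr ⟨tc, td⟩
    · exfalso; rw [pc, pd] at E; simp at E
    · exfalso; rw [pc, pd] at E; simp at E
    · exfalso; rw [pc, qc] at E; simp at E
    · exfalso; rw [pc, qc] at E; simp at E
    · exfalso; rw [pc, qc] at E; simp at E
  rcases key2 with ⟨tc, td⟩ | ⟨tc, td⟩
  · refine ⟨?_, ?_, ⟨fun _ => td, fun _ => tc⟩, ?_⟩
    · simp only [Set.mem_insert_iff, Set.mem_singleton_iff]; tauto
    · simp only [Set.mem_insert_iff, Set.mem_singleton_iff]; tauto
    · constructor
      · intro hyp; exact (excl c tc hyp).elim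
      · intro hyp; exact (excl d hyp td).elim
  · refine ⟨?_, ?_, ?_, ⟨fun _ => td, fun _ => tc⟩⟩
    · simp only [Set.mem_insert_iff, Set.mem_singleton_iff]; tauto
    · simp only [Set.mem_insert_iff, Set.mem_singleton_iff]; tauto
    · constructor
      · intro hyp; exact (excl c hyp tc).elim
      · intro hyp; exact (excl d td hyp).elim
end
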